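/- arXiv:1312.1126 — 11 statements merged into one kernel-verified Lean document; each statement's English description precedes it below -/
import Mathlib

section
/- Let n ≥ 1 and for x ∈ ℤⁿ let Δ_n(x) = ∏_{1≤i<j≤n}(x_j − x_i) be the Vandermonde determinant. Then Δ_n is harmonic for the generator of n independent one-sided random walks: for every x ∈ ℤⁿ, ∑_{i=1}^n (Δ_n(x + e_i) − Δ_n(x)) = 0, equivalently ∑_{i=1}^n Δ_n(x + e_i) = n · Δ_n(x), where e_i ∈ ℤⁿ is the i-th standard basis vector. -/
open Finset Polynomial

lemma pairs_eq_nested {n : ℕ} {M : Type*} [CommMonoid M] (g : Fin n → Fin n → M) :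
    ∏ p ∈ Finset.univ.filter (fun p : Fin n × Fin n => p.1 < p.2), g p.1 p.2
      = ∏ a : Fin n, ∏ b ∈ Ioi a, g a b := by
  rw [Finset.prod_filter, Fintype.prod_prod_type]
  refine Finset.prod_congr rfl fun a _ => ?_
  rw [← Finset.prod_filter]
  refine Finset.prod_congr ?_ fun _ _ => rfl
  ext b; simp

lemma split_at {n : ℕ} {M : Type*} [CommMonoid M] (f : Fin n → Fin n → M) (i : Fin n) :
    ∏ a : Fin n, ∏ b ∈ Ioi a, f a b
      = ((∏ a ∈ Finset.univ.erase i, ∏ b ∈ (Ioi a).erase i, f a b)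
          * ∏ b ∈ Ioi i, f i b) * ∏ a ∈ Iio i, f a i := by
  rw [← Finset.prod_erase_mul Finset.univ _ (Finset.mem_univ i)]
  have h1 : ∀ a ∈ Finset.univ.erase i, ∏ b ∈ Ioi a, f a b
      = (∏ b ∈ (Ioi a).erase i, f a b) * (if a < i then f a i else 1) := by
    intro a ha
    by_cases h : a < i
    · rw [if_pos h, mul_comm, Finset.mul_prod_erase _ _ (Finset.mem_Ioi.mpr h)]
    · rw [if_neg h, mul_one, Finset.erase_eq_of_notMem (by simp [h])]
  rw [Finset.prod_congr rfl h1, Finset.prod_mul_distrib]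
  have h2 : ∏ a ∈ Finset.univ.erase i, (if a < i then f a i else 1) = ∏ a ∈ Iio i, f a i := by
    rw [Finset.prod_ite, Finset.prod_const_one, mul_one]
    refine Finset.prod_congr ?_ fun _ _ => rfl
    ext a; simp; intro h; exact h.ne
  rw [h2, mul_right_comm]

lemma erase_split {n : ℕ} {R : Type*} [CommMonoid R] (i : Fin n) (g : Fin n → R) :
    ∏ j ∈ Finset.univ.erase i, g j = (∏ j ∈ Iio i, g j) * ∏ j ∈ Ioi i, g j := by
  rw [← Finset.prod_filter_mul_prod_filter_not (Finset.univ.erase i) (· < i)]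
  congr 1
  · refine Finset.prod_congr ?_ fun _ _ => rfl
    ext a; simp only [Finset.mem_filter, Finset.mem_erase, Finset.mem_univ, true_and,
      Finset.mem_Iio, and_iff_right_iff_imp]
    exact fun h => ⟨h.ne, trivial⟩
  · refine Finset.prod_congr ?_ fun _ _ => rfl
    ext a; simp only [Finset.mem_filter, Finset.mem_erase, Finset.mem_univ, true_and,
      Finset.mem_Ioi, not_lt]
    constructor
    · rintro ⟨⟨h1, _⟩, h2⟩; exact lt_of_le_of_ne h2 (Ne.symm h1)
    · intro h; exact ⟨⟨h.ne', trivial⟩, h.le⟩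

lemma ratio {n : ℕ} {R : Type*} [CommRing R] (y : Fin n → R) (i : Fin n) :
    (∏ a : Fin n, ∏ b ∈ Ioi a,
        ((y b + if b = i then 1 else 0) - (y a + if a = i then 1 else 0)))
        * ∏ j ∈ Finset.univ.erase i, (y i - y j)
    = (∏ a : Fin n, ∏ b ∈ Ioi a, (y b - y a))
        * ∏ j ∈ Finset.univ.erase i, (y i + 1 - y j) := by
  rw [split_at (fun a b => (y b + if b = i then 1 else 0) - (y a + if a = i then 1 else 0)) i,
      split_at (fun a b => y b - y a) i, erase_split i (fun j => y i - y j),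
      erase_split i (fun j => y i + 1 - y j)]
  have hP : (∏ a ∈ Finset.univ.erase i, ∏ b ∈ (Ioi a).erase i,
        ((y b + if b = i then 1 else 0) - (y a + if a = i then 1 else 0)))
      = ∏ a ∈ Finset.univ.erase i, ∏ b ∈ (Ioi a).erase i, (y b - y a) := by
    refine Finset.prod_congr rfl fun a ha => Finset.prod_congr rfl fun b hb => ?_
    have ha' : a ≠ i := (Finset.mem_erase.mp ha).1
    have hb' : b ≠ i := (Finset.mem_erase.mp hb).1
    simp [ha', hb']
  have hA' : (∏ b ∈ Ioi i,
        ((y b + if b = i then 1 else 0) - (y i + if i = i then 1 else 0)))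
      = ∏ b ∈ Ioi i, (y b - y i - 1) := by
    refine Finset.prod_congr rfl fun b hb => ?_
    have hb' : b ≠ i := (Finset.mem_Ioi.mp hb).ne'
    simp only [hb', if_false, if_true, ite_false, ite_true]; ring
  have hB' : (∏ a ∈ Iio i,
        ((y i + if i = i then 1 else 0) - (y a + if a = i then 1 else 0)))
      = ∏ a ∈ Iio i, (y i + 1 - y a) := by
    refine Finset.prod_congr rfl fun a ha => ?_
    have ha' : a ≠ i := (Finset.mem_Iio.mp ha).ne
    simp [ha']
  rw [hP, hA', hB']
  have key : (∏ b ∈ Ioi i, (y b - y i - 1)) * ∏ b ∈ Ioi i, (y i - y b)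
      = (∏ b ∈ Ioi i, (y b - y i)) * ∏ b ∈ Ioi i, (y i + 1 - y b) := by
    rw [← Finset.prod_mul_distrib, ← Finset.prod_mul_distrib]
    exact Finset.prod_congr rfl fun b _ => by ring
  linear_combination ((∏ a ∈ Finset.univ.erase i, ∏ b ∈ (Ioi a).erase i, (y b - y a))
    * (∏ a ∈ Iio i, (y i + 1 - y a)) * ∏ a ∈ Iio i, (y i - y a)) * key


lemma lagrange_sum {F : Type*} [Field F] {n : ℕ} (hn : 0 < n) (v : Fin n → F)
    (hv : Function.Injective v) :
    ∑ i : Fin n, (∏ j ∈ Finset.univ.erase i, (v i + 1 - v j))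
        * (∏ j ∈ Finset.univ.erase i, (v i - v j))⁻¹ = n := by
  set P1 : F[X] := ∏ j : Fin n, (X - C (v j - 1)) with hP1def
  set P2 : F[X] := ∏ j : Fin n, (X - C (v j)) with hP2def
  have hm1 : P1.Monic := monic_prod_of_monic _ _ fun j _ => monic_X_sub_C _
  have hm2 : P2.Monic := monic_prod_of_monic _ _ fun j _ => monic_X_sub_C _
  have hd1 : P1.natDegree = n := by
    rw [hP1def, natDegree_prod_of_monic _ _ fun j _ => monic_X_sub_C _]
    simp only [natDegree_X_sub_C]; simp
  have hd2 : P2.natDegree = n := by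
    rw [hP2def, natDegree_prod_of_monic _ _ fun j _ => monic_X_sub_C _]
    simp only [natDegree_X_sub_C]; simp
  have hdd : P1.degree = P2.degree := by
    rw [degree_eq_natDegree hm1.ne_zero, degree_eq_natDegree hm2.ne_zero, hd1, hd2]
  have hdeg : (P1 - P2).degree < ((Finset.univ : Finset (Fin n)).card : ℕ) := by
    have h := degree_sub_lt hdd hm1.ne_zero (by rw [hm1.leadingCoeff, hm2.leadingCoeff])
    rw [degree_eq_natDegree hm1.ne_zero, hd1] at h
    simpa using h
  have hinterp := Lagrange.eq_interpolate (s := (Finset.univ : Finset (Fin n))) (v := v)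
    hv.injOn hdeg
  have hcoeff := congrArg (fun p : F[X] => p.coeff (n - 1)) hinterp
  simp only [Lagrange.interpolate_apply, finset_sum_coeff, coeff_C_mul] at hcoeff
  -- LHS coefficient
  have hlhs : (P1 - P2).coeff (n - 1) = n := by
    rw [coeff_sub]
    have h1 : P1.coeff (n - 1) = P1.nextCoeff := by
      rw [nextCoeff_of_natDegree_pos (by omega), hd1]
    have h2 : P2.coeff (n - 1) = P2.nextCoeff := by
      rw [nextCoeff_of_natDegree_pos (by omega), hd2]
    rw [h1, h2, hP1def, hP2def,
      Monic.nextCoeff_prod _ _ fun j _ => monic_X_sub_C _,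
      Monic.nextCoeff_prod _ _ fun j _ => monic_X_sub_C _]
    simp only [nextCoeff_X_sub_C]
    rw [← Finset.sum_sub_distrib]
    simp
  have heval : ∀ i : Fin n, eval (v i) (P1 - P2) = ∏ j ∈ Finset.univ.erase i, (v i + 1 - v j) := by
    intro i
    rw [eval_sub, hP1def, hP2def, eval_prod, eval_prod]
    have h2 : ∏ j : Fin n, eval (v i) (X - C (v j)) = 0 :=
      Finset.prod_eq_zero (Finset.mem_univ i) (by simp)
    rw [h2, sub_zero, ← Finset.mul_prod_erase Finset.univ _ (Finset.mem_univ i)]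
    simp only [eval_sub, eval_X, eval_C]
    rw [show v i - (v i - 1) = 1 by ring, one_mul]
    exact Finset.prod_congr rfl fun j _ => by ring
  have hbasis : ∀ i : Fin n, (Lagrange.basis Finset.univ v i).coeff (n - 1)
      = (∏ j ∈ Finset.univ.erase i, (v i - v j))⁻¹ := by
    intro i
    rw [Lagrange.basis]
    simp only [Lagrange.basisDivisor]
    rw [Finset.prod_mul_distrib, ← map_prod, coeff_C_mul]
    have hmon : (∏ j ∈ Finset.univ.erase i, (X - C (v j))).Monic :=
      monic_prod_of_monic _ _ fun j _ => monic_X_sub_C _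
    have hdeg' : (∏ j ∈ Finset.univ.erase i, (X - C (v j))).natDegree = n - 1 := by
      rw [natDegree_prod_of_monic _ _ fun j _ => monic_X_sub_C _]
      simp only [natDegree_X_sub_C]
      rw [Finset.sum_const, smul_eq_mul, mul_one, Finset.card_erase_of_mem (Finset.mem_univ i)]
      simp
    rw [← hdeg', hmon.coeff_natDegree, mul_one, ← Finset.prod_inv_distrib]
  rw [hlhs] at hcoeff
  rw [hcoeff]
  exact Finset.sum_congr rfl fun i _ => by rw [heval i, hbasis i]


open Finset

/-- The Vandermonde determinant `Δ_n(x) = ∏_{1 ≤ i < j ≤ n} (x_j - x_i)` of an integer vector. -/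
def vandermondeProd {n : ℕ} (x : Fin n → ℤ) : ℤ :=
  ∏ p ∈ Finset.univ.filter (fun p : Fin n × Fin n => p.1 < p.2), (x p.2 - x p.1)

lemma vandermondeProd_cast {n : ℕ} (z : Fin n → ℤ) :
    ((vandermondeProd z : ℤ) : ℚ) = ∏ a : Fin n, ∏ b ∈ Ioi a, ((z b : ℚ) - (z a : ℚ)) := by
  rw [vandermondeProd, ← pairs_eq_nested (fun a b => ((z b : ℚ) - (z a : ℚ)))]
  push_cast
  rfl

lemma main_inj {n : ℕ} (hn : 0 < n) (x : Fin n → ℤ) (hx : Function.Injective x) :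
    ∑ i : Fin n, vandermondeProd (fun j => x j + if j = i then 1 else 0)
      = (n : ℤ) * vandermondeProd x := by
  set v : Fin n → ℚ := fun i => (x i : ℚ) with hvdef
  have hvinj : Function.Injective v := fun a b h => hx (Int.cast_injective h)
  have hDne : ∀ i, (∏ j ∈ Finset.univ.erase i, (v i - v j)) ≠ 0 := by
    intro i
    refine Finset.prod_ne_zero_iff.mpr fun j hj => sub_ne_zero_of_ne fun h => ?_
    exact (Finset.mem_erase.mp hj).1 (hvinj h).symm
  have hterm : ∀ i : Fin n, ((vandermondeProd (fun j => x j + if j = i then 1 else 0) : ℤ) : ℚ)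
      = ∏ a : Fin n, ∏ b ∈ Ioi a,
          ((v b + if b = i then 1 else 0) - (v a + if a = i then 1 else 0)) := by
    intro i
    rw [vandermondeProd_cast]
    refine Finset.prod_congr rfl fun a _ => Finset.prod_congr rfl fun b _ => ?_
    split_ifs <;> push_cast <;> ring
  have hterm2 : ∀ i : Fin n,
      (∏ a : Fin n, ∏ b ∈ Ioi a,
          ((v b + if b = i then 1 else 0) - (v a + if a = i then 1 else 0)))
        = (∏ a : Fin n, ∏ b ∈ Ioi a, (v b - v a))
            * ((∏ j ∈ Finset.univ.erase i, (v i + 1 - v j))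
                * (∏ j ∈ Finset.univ.erase i, (v i - v j))⁻¹) := by
    intro i
    have h := ratio v i
    rw [← mul_assoc, ← h, mul_assoc, mul_inv_cancel₀ (hDne i), mul_one]
  apply Int.cast_injective (α := ℚ)
  push_cast
  calc (∑ i : Fin n, ((vandermondeProd (fun j => x j + if j = i then 1 else 0) : ℤ) : ℚ))
      = ∑ i : Fin n, (∏ a : Fin n, ∏ b ∈ Ioi a, (v b - v a))
            * ((∏ j ∈ Finset.univ.erase i, (v i + 1 - v j))
                * (∏ j ∈ Finset.univ.erase i, (v i - v j))⁻¹) := by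
        refine Finset.sum_congr rfl fun i _ => ?_
        rw [hterm i, hterm2 i]
    _ = (∏ a : Fin n, ∏ b ∈ Ioi a, (v b - v a)) * (n : ℚ) := by
        rw [← Finset.mul_sum, lagrange_sum hn v hvinj]
    _ = (n : ℚ) * ((vandermondeProd x : ℤ) : ℚ) := by
        rw [vandermondeProd_cast, mul_comm]

lemma vandermondeProd_eq_det {n : ℕ} (z : Fin n → ℤ) :
    vandermondeProd z = (Matrix.vandermonde z).det := by
  rw [Matrix.det_vandermonde, vandermondeProd, pairs_eq_nested (fun a b => z b - z a)]

lemma main_noninj {n : ℕ} (x : Fin n → ℤ) {a b : Fin n} (hab : a ≠ b) (hxab : x a = x b) :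
    ∑ i : Fin n, vandermondeProd (fun j => x j + if j = i then 1 else 0)
      = (n : ℤ) * vandermondeProd x := by
  have hmem : (a, b) ∈ Finset.univ.filter (fun p : Fin n × Fin n => p.1 < p.2)
      ∨ (b, a) ∈ Finset.univ.filter (fun p : Fin n × Fin n => p.1 < p.2) := by
    rcases lt_or_gt_of_ne hab with h | h
    · left; simp [h]
    · right; simp [h]
  -- RHS is zero
  have hΔ : vandermondeProd x = 0 := by
    rcases hmem with h | h
    · exact Finset.prod_eq_zero h (by simp [hxab])
    · exact Finset.prod_eq_zero h (by simp [hxab])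
  -- terms other than a, b vanish
  have hzero : ∀ i : Fin n, i ≠ a → i ≠ b →
      vandermondeProd (fun j => x j + if j = i then 1 else 0) = 0 := by
    intro i hia hib
    rcases hmem with h | h
    · exact Finset.prod_eq_zero h (by simp [Ne.symm hia, Ne.symm hib, hxab])
    · exact Finset.prod_eq_zero h (by simp [Ne.symm hia, Ne.symm hib, hxab])
  -- terms a and b cancel
  have hswap : (fun j => x j + if j = b then 1 else 0)
      = (fun j => x j + if j = a then 1 else 0) ∘ (Equiv.swap a b) := by
    funext j
    rcases eq_or_ne j a with rfl | hja
    · simp [Equiv.swap_apply_left, hab, hxab, Ne.symm hab]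
    · rcases eq_or_ne j b with rfl | hjb
      · simp [Equiv.swap_apply_right, hxab]
      · simp [Equiv.swap_apply_of_ne_of_ne hja hjb, hja, hjb]
  have hcancel : vandermondeProd (fun j => x j + if j = b then 1 else 0)
      = - vandermondeProd (fun j => x j + if j = a then 1 else 0) := by
    rw [hswap, vandermondeProd_eq_det, vandermondeProd_eq_det]
    have hsub : Matrix.vandermonde ((fun j => x j + if j = a then 1 else 0) ∘ (Equiv.swap a b))
        = (Matrix.vandermonde (fun j => x j + if j = a then 1 else 0)).submatrix
            (Equiv.swap a b) id := by
      ext i j; simp [Matrix.vandermonde, Matrix.submatrix]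
    rw [hsub, Matrix.det_permute, Equiv.Perm.sign_swap hab]
    simp
  have hsum : ∑ i : Fin n, vandermondeProd (fun j => x j + if j = i then 1 else 0)
      = ∑ i ∈ ({a, b} : Finset (Fin n)),
          vandermondeProd (fun j => x j + if j = i then 1 else 0) := by
    refine (Finset.sum_subset (Finset.subset_univ _) fun i _ hi => ?_).symm
    simp only [Finset.mem_insert, Finset.mem_singleton, not_or] at hi
    exact hzero i hi.1 hi.2
  rw [hsum, Finset.sum_pair hab, hcancel, hΔ]
  ring

/-- The Vandermonde determinant is harmonic for the generator of `n` independent one-sided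
random walks: `∑_{i=1}^n (Δ_n(x + e_i) - Δ_n(x)) = 0`, i.e.
`∑_{i=1}^n Δ_n(x + e_i) = n · Δ_n(x)`. -/
theorem vandermonde_harmonic (n : ℕ) (hn : 1 ≤ n) (x : Fin n → ℤ) :
    ∑ i : Fin n, vandermondeProd (fun j => x j + if j = i then 1 else 0)
      = (n : ℤ) * vandermondeProd x := by
  by_cases hx : Function.Injective x
  · exact main_inj hn x hx
  · rw [Function.not_injective_iff] at hx
    obtain ⟨a, b, hxab, hab⟩ := hx
    exact main_noninj x hab hxab
end

section
/- Fix N ≥ 1 and x^N = (x_1 < x_2 < ⋯ < x_N) ∈ ℤ^N. The number of Gelfand–Tsetlin patterns with top row x^N, i.e., the number of sequences (x^1, x^2, …, x^{N−1}) with x^n ∈ W_n and x^n ≺ x^{n+1} for all 1 ≤ n ≤ N−1 (where x^N is the given vector), equals ∏_{1≤i<j≤N} (x_j − x_i)/(j − i) = Δ_N(x^N) / ∏_{n=1}^{N−1} n!. -/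
/-- `a` (a vector with `n` entries, one level down) interlaces with `b` (a vector with `n+1`
entries): `b_k < a_k ≤ b_{k+1}` for all `k`. -/
def Interlace {n : ℕ} (a : Fin n → ℤ) (b : Fin (n + 1) → ℤ) : Prop :=
  ∀ i : Fin n, b i.castSucc < a i ∧ a i ≤ b i.succ

/-- The set of Gelfand–Tsetlin patterns `(x^1, …, x^N)` (levels indexed by `n : Fin N`, level `n`
having `n+1` strictly increasing integer entries, consecutive levels interlacing) whose top
level equals the given vector `x`. -/
def GTwithTop (N : ℕ) (hN : 1 ≤ N) (x : Fin N → ℤ) :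
    Set ((n : Fin N) → Fin (n.1 + 1) → ℤ) :=
  {g | (∀ n : Fin N, StrictMono (g n)) ∧
       (∀ (k : ℕ) (h : k + 1 < N), Interlace (g ⟨k, by omega⟩) (g ⟨k + 1, h⟩)) ∧
       g ⟨N - 1, by omega⟩ = fun i => x (Fin.cast (show N - 1 + 1 = N by omega) i)}

open Finset

/-- falling-factorial-like product -/
def ff (k : ℕ) (t : ℤ) : ℤ := ∏ j ∈ Finset.range k, (t - j)

lemma ff_zero (t : ℤ) : ff 0 t = 1 := by simp [ff]

lemma ff_succ (k : ℕ) (t : ℤ) : ff (k+1) t = ff k t * (t - k) := by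
  simp [ff, Finset.prod_range_succ]

lemma ff_succ' (k : ℕ) (v : ℤ) : ff (k+1) (v+1) = (v+1) * ff k v := by
  rw [ff, Finset.prod_range_succ']
  simp only [Nat.cast_zero, sub_zero, ff]
  rw [mul_comm]
  congr 1
  apply Finset.prod_congr rfl
  intro j hj
  push_cast
  ring

lemma sum_ff (k : ℕ) (u : ℤ) : ∀ v, u ≤ v →
    ((k : ℤ) + 1) * ∑ t ∈ Finset.Ioc u v, ff k (t - 1) = ff (k+1) v - ff (k+1) u := by
  refine Int.le_induction ?_ ?_
  · simp
  · intro v hv ih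
    have h1 : Finset.Ioc u (v+1) = insert (v+1) (Finset.Ioc u v) := by
      ext t; simp only [Finset.mem_Ioc, Finset.mem_insert]; omega
    rw [h1, Finset.sum_insert (by simp), mul_add, ih]
    have : ff (k+1) (v+1) = ((k:ℤ)+1) * ff k v + ff (k+1) v := by
      rw [ff_succ', ff_succ]; ring
    have hv1 : v + 1 - 1 = v := by ring
    rw [hv1, this]; ring

/-- product over pairs as iterated product -/
lemma prod_pairs {n : ℕ} {M : Type*} [CommMonoid M] (f : Fin n → Fin n → M) :
    ∏ p ∈ Finset.univ.filter (fun p : Fin n × Fin n => p.1 < p.2), f p.1 p.2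
      = ∏ i : Fin n, ∏ j ∈ Finset.Ioi i, f i j := by
  rw [Finset.prod_filter, ← Finset.univ_product_univ, Finset.prod_product]
  refine Finset.prod_congr rfl fun i _ => ?_
  rw [← Finset.prod_filter]
  exact Finset.prod_congr (by ext j; simp) fun _ _ => rfl

lemma det_ff {m : ℕ} (y : Fin m → ℤ) :
    (Matrix.of fun (i k : Fin m) => ff k (y i)).det
      = ∏ p ∈ Finset.univ.filter (fun p : Fin m × Fin m => p.1 < p.2), (y p.2 - y p.1) := by
  have hmonic : ∀ k : Fin m, (∏ j ∈ Finset.range (k : ℕ),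
      (Polynomial.X - Polynomial.C (j : ℤ))).Monic :=
    fun k => Polynomial.monic_prod_of_monic _ _ fun j _ => Polynomial.monic_X_sub_C _
  have hdeg : ∀ k : Fin m, (∏ j ∈ Finset.range (k : ℕ),
      (Polynomial.X - Polynomial.C (j : ℤ))).natDegree = (k : ℕ) := by
    intro k
    rw [Polynomial.natDegree_prod_of_monic _ _ fun j _ => Polynomial.monic_X_sub_C _]
    simp only [Polynomial.natDegree_X_sub_C, Finset.sum_const, Finset.card_range,
      smul_eq_mul, mul_one]
  have h := Matrix.det_eval_matrixOfPolynomials_eq_det_vandermonde y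
    (fun k => ∏ j ∈ Finset.range (k : ℕ), (Polynomial.X - Polynomial.C (j : ℤ))) hdeg hmonic
  have heval : (Matrix.of fun (i k : Fin m) =>
      Polynomial.eval (y i) (∏ j ∈ Finset.range (k : ℕ), (Polynomial.X - Polynomial.C (j : ℤ))))
      = Matrix.of fun (i k : Fin m) => ff k (y i) := by
    ext i k
    simp [Polynomial.eval_prod, ff]
  rw [heval] at h
  rw [← h, Matrix.det_vandermonde, prod_pairs (fun i j => y j - y i)]

/-- Row-differencing determinant lemma: if the first column is all ones, the determinant
equals that of the matrix of successive row differences (remaining columns). -/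
def diffB {n : ℕ} (A : Matrix (Fin (n+1)) (Fin (n+1)) ℤ) : Matrix (Fin (n+1)) (Fin (n+1)) ℤ :=
  Matrix.of fun i k =>
    if h : (i : ℕ) = 0 then A i k else A i k - A (⟨(i : ℕ) - 1, by omega⟩ : Fin (n+1)) k

lemma det_diff {n : ℕ} (A : Matrix (Fin (n+1)) (Fin (n+1)) ℤ) (hone : ∀ i, A i 0 = 1) :
    A.det = (Matrix.of fun (i k : Fin n) => A i.succ k.succ - A i.castSucc k.succ).det := by
  classical
  have hBdef : ∀ i k, diffB A i k = if h : (i : ℕ) = 0 then A i k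
      else A i k - A (⟨(i : ℕ) - 1, by omega⟩ : Fin (n+1)) k := fun i k => rfl
  have hAB : A.det = (diffB A).det := by
    apply Matrix.det_eq_of_forall_row_eq_smul_add_pred (c := fun _ => 1)
    · intro j
      rw [hBdef]
      simp
    · intro i j
      have h1 : ((i.succ : Fin (n+1)) : ℕ) ≠ 0 := by simp
      rw [hBdef, dif_neg h1]
      have h2 : (⟨((i.succ : Fin (n+1)) : ℕ) - 1, by omega⟩ : Fin (n+1)) = i.castSucc := by
        apply Fin.ext
        simp
      rw [h2]
      ring
  have hcol : ∀ i : Fin (n+1), diffB A i 0 = if (i : ℕ) = 0 then 1 else 0 := by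
    intro i
    by_cases h : (i : ℕ) = 0
    · rw [hBdef, dif_pos h, if_pos h, hone]
    · rw [hBdef, dif_neg h, if_neg h, hone, hone, sub_self]
  have hexp : (diffB A).det = ((diffB A).submatrix Fin.succ Fin.succ).det := by
    rw [Matrix.det_succ_column_zero, Finset.sum_eq_single 0]
    · rw [hcol]
      simp [Fin.succAbove_zero]
    · intro i _ hi
      have hi' : (i : ℕ) ≠ 0 := fun h => hi (Fin.ext h)
      rw [hcol, if_neg hi']
      ring
    · simp
  have hsub : (diffB A).submatrix Fin.succ Fin.succ
      = Matrix.of fun (i k : Fin n) => A i.succ k.succ - A i.castSucc k.succ := by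
    ext i k
    have h1 : ((i.succ : Fin (n+1)) : ℕ) ≠ 0 := by simp
    rw [Matrix.submatrix_apply, hBdef, dif_neg h1]
    have h2 : (⟨((i.succ : Fin (n+1)) : ℕ) - 1, by omega⟩ : Fin (n+1)) = i.castSucc := by
      apply Fin.ext
      simp
    rw [h2]
    rfl
  rw [hAB, hexp, hsub]

lemma key (n : ℕ) (b : Fin (n+1) → ℤ) (hb : Monotone b) :
    (n.factorial : ℤ) *
      ∑ a ∈ Fintype.piFinset (fun i : Fin n => Finset.Ioc (b i.castSucc) (b i.succ)),
        vandermondeProd a = vandermondeProd b := by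
  classical
  -- Step 1: each summand as a determinant
  have hA : ∀ a : Fin n → ℤ,
      vandermondeProd a = (Matrix.of fun i k : Fin n => ff k (a i - 1)).det := by
    intro a
    rw [det_ff (fun i => a i - 1)]
    exact Finset.prod_congr rfl fun p _ => by ring
  -- Step 2: sum of determinants is determinant of summed rows
  have hdetmap : ∀ M : Matrix (Fin n) (Fin n) ℤ,
      M.det = (Matrix.detRowAlternating (R := ℤ) (n := Fin n)).toMultilinearMap
        (fun i => M i) := fun _ => rfl
  have hsum : ∑ a ∈ Fintype.piFinset
        (fun i : Fin n => Finset.Ioc (b i.castSucc) (b i.succ)),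
        (Matrix.of fun i k : Fin n => ff k (a i - 1)).det
      = (Matrix.of fun i k : Fin n =>
          ∑ t ∈ Finset.Ioc (b i.castSucc) (b i.succ), ff k (t - 1)).det := by
    rw [hdetmap]
    have hrows : (fun i : Fin n => (Matrix.of fun i k : Fin n =>
        ∑ t ∈ Finset.Ioc (b i.castSucc) (b i.succ), ff k (t - 1)) i)
      = (fun i : Fin n => ∑ t ∈ Finset.Ioc (b i.castSucc) (b i.succ),
          (fun k : Fin n => ff k (t - 1))) := by
      funext i
      exact funext fun k => by rw [Finset.sum_apply]; rfl
    rw [hrows]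
    rw [MultilinearMap.map_sum_finset
      (f := (Matrix.detRowAlternating (R := ℤ) (n := Fin n)).toMultilinearMap)
      (g := fun (_ : Fin n) (t : ℤ) => (fun k : Fin n => ff k (t - 1)))
      (A := fun i : Fin n => Finset.Ioc (b i.castSucc) (b i.succ))]
    exact Finset.sum_congr rfl fun a _ => (hdetmap _).symm
  -- Step 3: factor n! = prod (k+1) into the columns
  have hfact : (n.factorial : ℤ) = ∏ k : Fin n, ((k : ℤ) + 1) := by
    rw [Fin.prod_univ_eq_prod_range (fun k => (k : ℤ) + 1) n,
      ← Finset.prod_range_add_one_eq_factorial]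
    push_cast
    rfl
  -- Step 4: the scaled matrix has telescoping entries
  have hscale : (Matrix.of fun i k : Fin n =>
        ((k : ℤ) + 1) * ∑ t ∈ Finset.Ioc (b i.castSucc) (b i.succ), ff k (t - 1))
      = Matrix.of fun i k : Fin n =>
        ff ((k : ℕ) + 1) (b i.succ) - ff ((k : ℕ) + 1) (b i.castSucc) := by
    ext i k
    exact sum_ff k (b i.castSucc) (b i.succ) (hb (Fin.castSucc_le_succ i))
  -- Step 5: big matrix and assembly
  have hdiff := det_diff (Matrix.of fun (i k : Fin (n+1)) => ff k (b i))
    (fun i => ff_zero (b i))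
  have hdetA1 : (Matrix.of fun (i k : Fin (n+1)) => ff k (b i)).det
      = vandermondeProd b := det_ff b
  calc (n.factorial : ℤ) * ∑ a ∈ Fintype.piFinset
        (fun i : Fin n => Finset.Ioc (b i.castSucc) (b i.succ)), vandermondeProd a
      = (∏ k : Fin n, ((k : ℤ) + 1)) * (Matrix.of fun i k : Fin n =>
          ∑ t ∈ Finset.Ioc (b i.castSucc) (b i.succ), ff k (t - 1)).det := by
        rw [hfact, ← hsum]
        congr 1
        exact Finset.sum_congr rfl fun a _ => hA a
    _ = (Matrix.of fun i k : Fin n => ((k : ℤ) + 1) *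
          ∑ t ∈ Finset.Ioc (b i.castSucc) (b i.succ), ff k (t - 1)).det := by
        exact (Matrix.det_mul_row (fun k : Fin n => ((k : ℤ) + 1)) (Matrix.of fun i k : Fin n =>
            ∑ t ∈ Finset.Ioc (b i.castSucc) (b i.succ), ff k (t - 1))).symm
    _ = vandermondeProd b := by
        rw [hscale, ← hdetA1, hdiff]
        congr 1

/-! ### Combinatorial part -/

lemma prod_pairs2 {n : ℕ} {M : Type*} [CommMonoid M] (f : Fin n → Fin n → M) :
    ∏ p ∈ Finset.univ.filter (fun p : Fin n × Fin n => p.1 < p.2), f p.1 p.2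
      = ∏ j : Fin n, ∏ i ∈ Finset.Iio j, f i j := by
  rw [Finset.prod_filter, ← Finset.univ_product_univ, Finset.prod_product_right]
  refine Finset.prod_congr rfl fun j _ => ?_
  rw [← Finset.prod_filter]
  exact Finset.prod_congr (by ext i; simp) fun _ _ => rfl

lemma prod_Iio_fin {M : Type*} [CommMonoid M] {n : ℕ} (j : Fin n) (g : ℕ → M) :
    ∏ i ∈ Finset.Iio j, g i.1 = ∏ m ∈ Finset.range j.1, g m := by
  rw [← Nat.Iio_eq_range, ← Fin.map_valEmbedding_Iio, Finset.prod_map]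
  rfl

lemma prod_range_sub_fact (k : ℕ) : ∏ m ∈ Finset.range k, (k - m) = k.factorial := by
  calc ∏ m ∈ Finset.range k, (k - m)
      = ∏ m ∈ Finset.range k, ((fun j => j + 1) (k - 1 - m)) := by
        refine Finset.prod_congr rfl fun m hm => ?_
        have := Finset.mem_range.mp hm
        show k - m = k - 1 - m + 1
        omega
    _ = ∏ m ∈ Finset.range k, (m + 1) := Finset.prod_range_reflect _ _
    _ = k.factorial := Finset.prod_range_add_one_eq_factorial k

/-- truncation of a GT pattern: drop the top level -/
def truncF {M : ℕ} (G : (n : Fin (M+2)) → Fin (n.1+1) → ℤ) :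
    (n : Fin (M+1)) → Fin (n.1+1) → ℤ :=
  fun n => G ⟨n.1, Nat.lt_succ_of_lt n.isLt⟩

/-- extension of a GT pattern by a new top level `x` -/
def extF {M : ℕ} (x : Fin (M+2) → ℤ) (g : (n : Fin (M+1)) → Fin (n.1+1) → ℤ) :
    (n : Fin (M+2)) → Fin (n.1+1) → ℤ :=
  fun n => if h : n.1 < M+1 then g ⟨n.1, h⟩
    else fun i => x ⟨i.1, by have h1 := i.isLt; have h2 := n.isLt; omega⟩

lemma extF_lt {M : ℕ} {x : Fin (M+2) → ℤ} {g : (n : Fin (M+1)) → Fin (n.1+1) → ℤ}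
    (n : Fin (M+2)) (h : n.1 < M+1) : extF x g n = g ⟨n.1, h⟩ := dif_pos h

lemma extF_last {M : ℕ} {x : Fin (M+2) → ℤ} {g : (n : Fin (M+1)) → Fin (n.1+1) → ℤ}
    (n : Fin (M+2)) (h : ¬ n.1 < M+1) :
    extF x g n = fun i => x ⟨i.1, by have h1 := i.isLt; have h2 := n.isLt; omega⟩ := dif_neg h

lemma mem_of_ext {M : ℕ} {x : Fin (M+2) → ℤ} (hx : StrictMono x) {y : Fin (M+1) → ℤ}
    (hy : ∀ i : Fin (M+1), x i.castSucc < y i ∧ y i ≤ x i.succ)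
    {g} (hg : g ∈ GTwithTop (M+1) (by omega) y) :
    extF x g ∈ GTwithTop (M+2) (by omega) x := by
  obtain ⟨hsm, hint, htop⟩ := hg
  have htop' : g ⟨M, by omega⟩ = fun i : Fin (M+1) => y (Fin.cast (by omega) i) := htop
  refine ⟨?_, ?_, ?_⟩
  · intro n
    by_cases h : n.1 < M+1
    · rw [extF_lt n h]
      exact hsm _
    · rw [extF_last n h]
      intro a b hab
      exact hx hab
  · intro k h
    by_cases hk : k + 1 < M + 1
    · intro i
      have h3 := hint k hk i
      have a1 : extF x g ⟨k, by omega⟩ i = g ⟨k, by omega⟩ i :=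
        congrFun (extF_lt ⟨k, by omega⟩ (by show k < M+1; omega)) i
      have b1 : extF x g ⟨k+1, h⟩ i.castSucc = g ⟨k+1, hk⟩ i.castSucc :=
        congrFun (extF_lt ⟨k+1, h⟩ (by show k+1 < M+1; omega)) i.castSucc
      have b2 : extF x g ⟨k+1, h⟩ i.succ = g ⟨k+1, hk⟩ i.succ :=
        congrFun (extF_lt ⟨k+1, h⟩ (by show k+1 < M+1; omega)) i.succ
      refine ⟨?_, ?_⟩
      · rw [b1, a1]
        exact h3.1
      · rw [a1, b2]
        exact h3.2
    · have hk' : k = M := by omega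
      subst hk'
      intro i
      have h3 := hy i
      have a1 : extF x g ⟨k, by omega⟩ i = g ⟨k, by omega⟩ i :=
        congrFun (extF_lt ⟨k, by omega⟩ (by show k < k+1; omega)) i
      have b1 : extF x g ⟨k+1, h⟩ i.castSucc
          = x ⟨i.castSucc.1, i.castSucc.isLt⟩ :=
        congrFun (extF_last ⟨k+1, h⟩ (by show ¬ (k+1 < k+1); omega)) i.castSucc
      have b2 : extF x g ⟨k+1, h⟩ i.succ
          = x ⟨i.succ.1, i.succ.isLt⟩ :=
        congrFun (extF_last ⟨k+1, h⟩ (by show ¬ (k+1 < k+1); omega)) i.succ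
      have a2 : g ⟨k, by omega⟩ i = y i := by rw [htop']; rfl
      refine ⟨?_, ?_⟩
      · rw [b1, a1, a2]
        exact h3.1
      · rw [a1, b2, a2]
        exact h3.2
  · exact extF_last ⟨M+1, by omega⟩ (by show ¬ (M+1 < M+1); omega)

lemma trunc_top_mem {M : ℕ} {x : Fin (M+2) → ℤ} {G} (hG : G ∈ GTwithTop (M+2) (by omega) x)
    (i : Fin (M+1)) : x i.castSucc < G ⟨M, by omega⟩ i ∧ G ⟨M, by omega⟩ i ≤ x i.succ := by
  obtain ⟨hsm, hint, htop⟩ := hG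
  have htop' : G ⟨M+1, by omega⟩ = fun i : Fin (M+2) => x (Fin.cast (by omega) i) := htop
  have h := hint M (by omega) i
  rw [htop'] at h
  exact h

lemma mem_of_trunc {M : ℕ} {x : Fin (M+2) → ℤ} {G} (hG : G ∈ GTwithTop (M+2) (by omega) x) :
    truncF G ∈ GTwithTop (M+1) (by omega) (G ⟨M, by omega⟩) := by
  obtain ⟨hsm, hint, htop⟩ := hG
  exact ⟨fun n => hsm _, fun k h => hint k (by omega), rfl⟩

lemma trunc_ext {M : ℕ} (x : Fin (M+2) → ℤ) (g : (n : Fin (M+1)) → Fin (n.1+1) → ℤ) :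
    truncF (extF x g) = g := by
  funext n
  show extF x g ⟨n.1, _⟩ = g n
  rw [extF_lt ⟨n.1, Nat.lt_succ_of_lt n.isLt⟩ (by show n.1 < M+1; omega)]

lemma ext_trunc {M : ℕ} {x : Fin (M+2) → ℤ} {G} (hG : G ∈ GTwithTop (M+2) (by omega) x) :
    extF x (truncF G) = G := by
  obtain ⟨hsm, hint, htop⟩ := hG
  have htop' : G ⟨M+1, by omega⟩ = fun i : Fin (M+2) => x (Fin.cast (by omega) i) := htop
  funext n
  by_cases h : n.1 < M+1
  · rw [extF_lt n h]
    rfl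
  · rw [extF_last n h]
    have hn : n = ⟨M+1, Nat.lt_succ_self (M+1)⟩ := Fin.ext (by have := n.isLt; show n.1 = M+1; omega)
    subst hn
    rw [htop']
    rfl

lemma strictMono_of_interlace {M : ℕ} {x : Fin (M+2) → ℤ} (hx : StrictMono x)
    {y : Fin (M+1) → ℤ} (hy : ∀ i : Fin (M+1), x i.castSucc < y i ∧ y i ≤ x i.succ) :
    StrictMono y := by
  intro i j hij
  calc y i ≤ x i.succ := (hy i).2
    _ ≤ x j.castSucc := hx.monotone (by
        rw [Fin.le_def]
        rw [Fin.lt_def] at hij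
        simpa using hij)
    _ < y j := (hy j).1

lemma aux_main (M : ℕ) : ∀ (x : Fin (M+1) → ℤ), StrictMono x →
    (GTwithTop (M+1) (by omega) x).Finite ∧
    (Nat.card (GTwithTop (M+1) (by omega) x) : ℤ) * ∏ n ∈ Finset.range (M+1), (n.factorial : ℤ)
      = vandermondeProd x := by
  induction M with
  | zero =>
    intro x hx
    set g0 : (n : Fin 1) → Fin (n.1+1) → ℤ :=
      fun n i => x ⟨i.1, by have h1 := i.isLt; have h2 := n.isLt; omega⟩ with hg0
    have hset : GTwithTop 1 (by omega) x = {g0} := by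
      ext g
      simp only [GTwithTop, Set.mem_setOf_eq, Set.mem_singleton_iff]
      constructor
      · rintro ⟨hsm, hint, htop⟩
        have htop' : g ⟨0, by omega⟩ = fun i : Fin 1 => x (Fin.cast (by omega) i) := htop
        funext n i
        have hn : n = ⟨0, Nat.lt_irrefl 1 |> fun _ => Nat.one_pos⟩ :=
          Fin.ext (by have := n.isLt; omega)
        subst hn
        rw [htop']
        rfl
      · rintro rfl
        refine ⟨?_, ?_, ?_⟩
        · intro n a b hab
          exact hx hab
        · intro k h
          exact absurd h (by omega)
        · rfl
    rw [hset]
    refine ⟨Set.finite_singleton g0, ?_⟩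
    haveI := Set.uniqueSingleton g0
    rw [Nat.card_unique]
    have hvdp : vandermondeProd x = 1 := by
      apply Finset.prod_eq_one
      intro p hp
      have := (Finset.mem_filter.mp hp).2
      rw [Fin.lt_def] at this
      have h1 := p.1.isLt
      have h2 := p.2.isLt
      omega
    simp [hvdp]
  | succ M IH =>
    intro x hx
    classical
    set S := Fintype.piFinset (fun i : Fin (M+1) => Finset.Ioc (x i.castSucc) (x i.succ)) with hS
    have hmemS : ∀ y : Fin (M+1) → ℤ, y ∈ S ↔
        ∀ i : Fin (M+1), x i.castSucc < y i ∧ y i ≤ x i.succ := by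
      intro y
      rw [hS, Fintype.mem_piFinset]
      exact forall_congr' fun i => Finset.mem_Ioc
    have hySM : ∀ y ∈ S, StrictMono y := fun y hy =>
      strictMono_of_interlace hx ((hmemS y).mp hy)
    -- the equivalence
    let E : (GTwithTop (M+2) (by omega) x) ≃
        (y : ↥S) × ↥(GTwithTop (M+1) (by omega) (y : Fin (M+1) → ℤ)) :=
      { toFun := fun G => ⟨⟨G.1 ⟨M, by omega⟩, (hmemS _).mpr (trunc_top_mem G.2)⟩,
          ⟨truncF G.1, mem_of_trunc G.2⟩⟩
        invFun := fun p => ⟨extF x p.2.1, mem_of_ext hx ((hmemS _).mp p.1.2) p.2.2⟩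
        left_inv := fun G => Subtype.ext (ext_trunc G.2)
        right_inv := by
          rintro ⟨⟨y, hy⟩, g, hg⟩
          have h1 : extF x g ⟨M, by omega⟩ = y := by
            rw [extF_lt ⟨M, by omega⟩ (by show M < M+1; omega)]
            exact hg.2.2
          subst h1
          refine Sigma.ext (Subtype.ext rfl) (heq_of_eq (Subtype.ext (trunc_ext x g))) }
    have hfin : ∀ y : ↥S, (GTwithTop (M+1) (by omega) (y : Fin (M+1) → ℤ)).Finite :=
      fun y => (IH y.1 (hySM y.1 y.2)).1
    haveI hfin' : ∀ y : ↥S, Finite ↥(GTwithTop (M+1) (by omega) (y : Fin (M+1) → ℤ)) :=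
      fun y => (hfin y).to_subtype
    haveI : Finite ((y : ↥S) × ↥(GTwithTop (M+1) (Nat.succ_le_succ (Nat.zero_le M)) (y : Fin (M+1) → ℤ))) :=
      inferInstance
    have hTfin : (GTwithTop (M+2) (by omega) x).Finite := by
      rw [← Set.finite_coe_iff]
      exact Finite.of_equiv _ E.symm
    refine ⟨hTfin, ?_⟩
    have hc : Nat.card (GTwithTop (M+2) (by omega) x)
        = ∑ y ∈ S, Nat.card (GTwithTop (M+1) (by omega) y) := by
      rw [Nat.card_congr E]
      letI : ∀ y : ↥S, Fintype ↥(GTwithTop (M+1) (by omega) (y : Fin (M+1) → ℤ)) :=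
        fun y => (hfin y).fintype
      rw [Nat.card_eq_fintype_card, Fintype.card_sigma,
        ← Finset.sum_coe_sort S (fun y => Nat.card (GTwithTop (M+1) (by omega) y))]
      exact Finset.sum_congr rfl fun y _ => (Nat.card_eq_fintype_card).symm
    rw [hc, Finset.prod_range_succ]
    push_cast
    have hcards : ∀ y ∈ S, (Nat.card (GTwithTop (M+1) (by omega) y) : ℤ)
        * ∏ n ∈ Finset.range (M+1), (n.factorial : ℤ) = vandermondeProd y :=
      fun y hy => (IH y (hySM y hy)).2
    calc (∑ y ∈ S, (Nat.card (GTwithTop (M+1) (by omega) y) : ℤ))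
          * ((∏ n ∈ Finset.range (M+1), (n.factorial : ℤ)) * ((M+1).factorial : ℤ))
        = ((M+1).factorial : ℤ) * ∑ y ∈ S, ((Nat.card (GTwithTop (M+1) (by omega) y) : ℤ)
            * ∏ n ∈ Finset.range (M+1), (n.factorial : ℤ)) := by
          rw [Finset.mul_sum, Finset.sum_mul]
          exact Finset.sum_congr rfl fun y _ => by ring
        _ = ((M+1).factorial : ℤ) * ∑ y ∈ S, vandermondeProd y := by
          congr 1
          exact Finset.sum_congr rfl hcards
        _ = vandermondeProd x := key (M+1) x hx.monotone

/-- The number of Gelfand–Tsetlin patterns with fixed top row `x^N = (x_1 < … < x_N)` equals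
`∏_{1≤i<j≤N} (x_j - x_i)/(j - i) = Δ_N(x^N)/∏_{n=1}^{N-1} n!`. -/
theorem gt_pattern_count (N : ℕ) (hN : 1 ≤ N) (x : Fin N → ℤ) (hx : StrictMono x) :
    ((Nat.card (GTwithTop N hN x) : ℚ) =
      ∏ p ∈ Finset.univ.filter (fun p : Fin N × Fin N => p.1 < p.2),
        ((x p.2 - x p.1 : ℤ) : ℚ) / (((p.2 : ℕ) - (p.1 : ℕ) : ℕ) : ℚ))
    ∧ (Nat.card (GTwithTop N hN x) : ℤ) * ∏ n ∈ Finset.range N, (n.factorial : ℤ)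
        = vandermondeProd x := by
  obtain ⟨M, rfl⟩ : ∃ M, N = M + 1 := ⟨N - 1, by omega⟩
  obtain ⟨hfin, hI⟩ := aux_main M x hx
  have hint' : (Nat.card (GTwithTop (M+1) hN x) : ℤ)
      * ∏ n ∈ Finset.range (M+1), (n.factorial : ℤ) = vandermondeProd x := hI
  refine ⟨?_, hint'⟩
  have hQ2 : ∏ p ∈ Finset.univ.filter (fun p : Fin (M+1) × Fin (M+1) => p.1 < p.2),
      (((p.2 : ℕ) - (p.1 : ℕ) : ℕ) : ℚ) = ∏ n ∈ Finset.range (M+1), (n.factorial : ℚ) := by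
    rw [prod_pairs2 (fun i j : Fin (M+1) => (((j : ℕ) - (i : ℕ) : ℕ) : ℚ)),
      ← Fin.prod_univ_eq_prod_range (fun n => (n.factorial : ℚ)) (M+1)]
    refine Finset.prod_congr rfl fun j _ => ?_
    rw [prod_Iio_fin j (fun m => (((j : ℕ) - m : ℕ) : ℚ)), ← Nat.cast_prod,
      prod_range_sub_fact]
  have hQ1 : ∏ p ∈ Finset.univ.filter (fun p : Fin (M+1) × Fin (M+1) => p.1 < p.2),
      ((x p.2 - x p.1 : ℤ) : ℚ) = ((vandermondeProd x : ℤ) : ℚ) := by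
    rw [show vandermondeProd x = ∏ p ∈ Finset.univ.filter
      (fun p : Fin (M+1) × Fin (M+1) => p.1 < p.2), (x p.2 - x p.1) from rfl, Int.cast_prod]
  have hF : (∏ n ∈ Finset.range (M+1), (n.factorial : ℚ)) ≠ 0 := by
    apply Finset.prod_ne_zero_iff.mpr
    intro n _
    exact_mod_cast n.factorial_ne_zero
  rw [Finset.prod_div_distrib, hQ2, hQ1, eq_div_iff hF, ← hint']
  push_cast
  ring
end

section
/- Let N ≥ 1, x^N ∈ W_N and x^{N−1} ∈ W_{N−1}. Define the N×N matrix M by M_{i,j} = 1_{[x_j^N ≥ x_i^{N−1}]} for 1 ≤ i ≤ N−1 and 1 ≤ j ≤ N, and M_{N,j} = 1 for all j (the row of the 'virtual' variable). Then det M = (−1)^{N−1} if x^{N−1} ≺ x^N, and det M = 0 otherwise. In particular the interlacing indicator 1_{[x^{N−1} ≺ x^N]} equals ± det(φ(x_i^{N−1}, x_j^N))_{i,j=1}^N with φ(x,y) = 1_{[y ≥ x]} and φ(virt, y) = 1. -/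
theorem interlacing_det_aux (n : ℕ) (y : Fin n → ℤ) (x : Fin (n + 1) → ℤ)
    (hy : StrictMono y) (hx : StrictMono x) :
    (Matrix.of fun i j : Fin (n + 1) =>
        if h : (i : ℕ) < n then (if y ⟨i, h⟩ ≤ x j then (1 : ℤ) else 0) else 1).det
      = if ∀ k : Fin n,
            x ⟨k, by have := k.2; omega⟩ < y k ∧ y k ≤ x ⟨(k : ℕ) + 1, by have := k.2; omega⟩
        then (-1 : ℤ) ^ n else 0 := by
  set M : Matrix (Fin (n+1)) (Fin (n+1)) ℤ :=
    (Matrix.of fun i j : Fin (n+1) =>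
        if h : (i : ℕ) < n then (if y ⟨i, h⟩ ≤ x j then (1 : ℤ) else 0) else 1) with hM
  -- threshold function
  have hrow : ∀ (i : Fin n) (l : Fin (n+1)),
      y i ≤ x l ↔ (Finset.univ.filter (fun m : Fin (n+1) => x m < y i)).card ≤ (l : ℕ) := by
    intro i l
    constructor
    · intro h
      have hsub : (Finset.univ.filter (fun m : Fin (n+1) => x m < y i)) ⊆ Finset.Iio l := by
        intro m hm
        simp only [Finset.mem_filter, Finset.mem_univ, true_and] at hm
        simp only [Finset.mem_Iio]
        exact hx.lt_iff_lt.mp (lt_of_lt_of_le hm h)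
      have := Finset.card_le_card hsub
      rwa [Fin.card_Iio] at this
    · intro h
      by_contra hlt
      push_neg at hlt
      have hsub : Finset.Iic l ⊆ (Finset.univ.filter (fun m : Fin (n+1) => x m < y i)) := by
        intro m hm
        simp only [Finset.mem_Iic] at hm
        simp only [Finset.mem_filter, Finset.mem_univ, true_and]
        exact lt_of_le_of_lt (hx.monotone hm) hlt
      have h2 := Finset.card_le_card hsub
      rw [Fin.card_Iic] at h2
      omega
  set c : Fin n → ℕ := fun i => (Finset.univ.filter (fun l : Fin (n+1) => x l < y i)).card
    with hc
  have hrow' : ∀ (i : Fin n) (l : Fin (n+1)), y i ≤ x l ↔ c i ≤ (l : ℕ) := hrow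
  -- rows with equal threshold are equal
  have hroweq : ∀ i j : Fin n, c i = c j →
      M ⟨i, by omega⟩ = M ⟨j, by omega⟩ := by
    intro i j hij
    funext l
    have h1 : ((⟨(i : ℕ), by omega⟩ : Fin (n+1)) : ℕ) < n := i.2
    have h2 : ((⟨(j : ℕ), by omega⟩ : Fin (n+1)) : ℕ) < n := j.2
    simp only [hM, Matrix.of_apply, dif_pos h1, dif_pos h2]
    have key : y ⟨((⟨(i : ℕ), by omega⟩ : Fin (n+1)) : ℕ), h1⟩ ≤ x l
        ↔ y ⟨((⟨(j : ℕ), by omega⟩ : Fin (n+1)) : ℕ), h2⟩ ≤ x l := by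
      rw [hrow', hrow']
      simp only [Fin.eta]
      omega
    split_ifs with ha hb hb <;> tauto
  by_cases hint : ∀ k : Fin n,
      x ⟨k, by have := k.2; omega⟩ < y k ∧ y k ≤ x ⟨(k : ℕ) + 1, by have := k.2; omega⟩
  · rw [if_pos hint]
    set U : Matrix (Fin (n+1)) (Fin (n+1)) ℤ :=
      Matrix.of fun i j : Fin (n+1) => if i ≤ j then (1 : ℤ) else 0 with hU
    have hMU : M = U.submatrix (finRotate (n+1)) id := by
      funext i j
      simp only [hM, hU, Matrix.submatrix_apply, Matrix.of_apply, id_eq,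
        finRotate_succ_apply]
      by_cases h : (i : ℕ) < n
      · rw [dif_pos h]
        have hadd : ((i + 1 : Fin (n+1)) : ℕ) = (i : ℕ) + 1 := by
          rw [Fin.val_add_one_of_lt]
          exact Fin.lt_last_iff_ne_last.mpr (by
            intro hl
            rw [hl] at h
            simp at h)
        obtain ⟨h1, h2⟩ := hint ⟨i, h⟩
        simp only [Fin.val_mk] at h1 h2
        have key : y ⟨i, h⟩ ≤ x j ↔ (i : ℕ) + 1 ≤ (j : ℕ) := by
          constructor
          · intro hle
            by_contra hc2
            push_neg at hc2
            have hxx : x j ≤ x ⟨(i : ℕ), by omega⟩ := hx.monotone (by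
              rw [Fin.le_iff_val_le_val]; simp only [Fin.val_mk]; omega)
            have : x ⟨(i : ℕ), by omega⟩ < y ⟨i, h⟩ := h1
            linarith
          · intro hle
            have hxx : x ⟨(i : ℕ) + 1, by omega⟩ ≤ x j := hx.monotone (by
              rw [Fin.le_iff_val_le_val]; simp only [Fin.val_mk]; omega)
            have : y ⟨i, h⟩ ≤ x ⟨(i : ℕ) + 1, by omega⟩ := h2
            linarith
        by_cases hij : (i : ℕ) + 1 ≤ (j : ℕ)
        · rw [if_pos (key.mpr hij), if_pos (by rw [Fin.le_iff_val_le_val, hadd]; exact hij)]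
        · rw [if_neg (fun hle => hij (key.mp hle)),
            if_neg (by rw [Fin.le_iff_val_le_val, hadd]; exact hij)]
      · rw [dif_neg h]
        have hi : i = Fin.last n := by
          apply Fin.ext; simp only [Fin.val_last]; have := i.2; omega
        rw [hi]
        have hrot : (Fin.last n) + 1 = (0 : Fin (n+1)) := by
          apply Fin.ext
          simp [Fin.add_def]
        rw [hrot, if_pos (Fin.zero_le j)]
    rw [hMU, Matrix.det_permute, sign_finRotate]
    have hUdet : U.det = 1 := by
      rw [Matrix.det_of_upperTriangular]
      · simp [hU]
      · intro i j hij
        simp only [hU, Matrix.of_apply]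
        rw [if_neg (by exact fun hle => absurd (lt_of_le_of_lt hle hij) (lt_irrefl _))]
    rw [hUdet]
    push_cast
    ring
  · rw [if_neg hint]
    push_neg at hint
    obtain ⟨k, hk⟩ := hint
    have hk' : y k ≤ x ⟨k, by have := k.2; omega⟩ ∨
        x ⟨(k : ℕ) + 1, by have := k.2; omega⟩ < y k := by
      by_cases h : x ⟨k, by have := k.2; omega⟩ < y k
      · exact Or.inr (hk h)
      · exact Or.inl (le_of_not_gt h)
    rcases hk' with hk | hk
    · -- y k ≤ x k : rows 0..k plus last row; thresholds ≤ k
      have hck : ∀ i : Fin n, (i : ℕ) ≤ (k : ℕ) → c i ≤ (k : ℕ) := by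
        intro i hik
        have hle : y i ≤ x ⟨k, by have := k.2; omega⟩ := le_trans (hy.monotone (by
          rw [Fin.le_iff_val_le_val]; exact hik)) hk
        have := (hrow' i ⟨k, by have := k.2; omega⟩).mp hle
        simpa using this
      by_cases hz : ∃ i : Fin n, (i : ℕ) ≤ (k : ℕ) ∧ c i = 0
      · -- row i is all ones = last row
        obtain ⟨i, hik, hci⟩ := hz
        apply Matrix.det_zero_of_row_eq (i := (⟨i, by omega⟩ : Fin (n+1)))
          (j := Fin.last n)
        · intro h
          have := congrArg Fin.val h
          simp only [Fin.val_last, Fin.val_mk] at this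
          have := i.2; omega
        · funext l
          have h1 : ((⟨(i : ℕ), by omega⟩ : Fin (n+1)) : ℕ) < n := i.2
          simp only [hM, Matrix.of_apply, dif_pos h1, Fin.val_last,
            dif_neg (lt_irrefl n)]
          rw [if_pos]
          rw [show y ⟨((⟨(i : ℕ), by omega⟩ : Fin (n+1)) : ℕ), h1⟩ = y i from rfl]
          rw [hrow' i l]
          omega
      · push_neg at hz
        have := Finset.exists_ne_map_eq_of_card_lt_of_maps_to
          (s := Finset.univ.filter (fun i : Fin n => (i : ℕ) ≤ (k : ℕ)))
          (t := Finset.Icc 1 (k : ℕ)) (f := c)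
          (by
            rw [Nat.card_Icc]
            have hcard : (Finset.univ.filter (fun i : Fin n => (i : ℕ) ≤ (k : ℕ))).card
                = (k : ℕ) + 1 := by
              rw [show (Finset.univ.filter (fun i : Fin n => (i : ℕ) ≤ (k : ℕ)))
                  = Finset.Iic k by ext m; simp only [Finset.mem_filter, Finset.mem_univ, true_and,
                    Finset.mem_Iic, Fin.le_iff_val_le_val]]
              rw [Fin.card_Iic]
            omega)
          (by
            intro i hi
            simp only [Finset.mem_coe, Finset.mem_filter, Finset.mem_univ, true_and] at hi
            simp only [Finset.mem_coe, Finset.mem_Icc]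
            exact ⟨by have := hz i hi; omega, hck i hi⟩)
        obtain ⟨i, _, j, _, hij, hcij⟩ := this
        apply Matrix.det_zero_of_row_eq (i := (⟨i, by omega⟩ : Fin (n+1)))
          (j := (⟨j, by omega⟩ : Fin (n+1)))
        · exact fun h => hij (Fin.ext (by simpa using congrArg Fin.val h))
        · exact hroweq i j hcij
    · -- x (k+1) < y k : rows k..n-1 have thresholds ≥ k+2
      have hck : ∀ i : Fin n, (k : ℕ) ≤ (i : ℕ) → (k : ℕ) + 2 ≤ c i := by
        intro i hik
        have hyi : x ⟨(k : ℕ) + 1, by have := k.2; omega⟩ < y i :=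
          lt_of_lt_of_le hk (hy.monotone (by rw [Fin.le_iff_val_le_val]; exact hik))
        have hiff := (hrow' i ⟨(k : ℕ) + 1, by have := k.2; omega⟩)
        simp only [Fin.val_mk] at hiff
        by_contra hcon
        push_neg at hcon
        have : y i ≤ x ⟨(k : ℕ) + 1, by have := k.2; omega⟩ := hiff.mpr (by omega)
        linarith
      by_cases hz : ∃ i : Fin n, (k : ℕ) ≤ (i : ℕ) ∧ c i = n + 1
      · -- zero row
        obtain ⟨i, hik, hci⟩ := hz
        apply Matrix.det_eq_zero_of_row_eq_zero (⟨i, by omega⟩ : Fin (n+1))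
        intro l
        have h1 : ((⟨(i : ℕ), by omega⟩ : Fin (n+1)) : ℕ) < n := i.2
        simp only [hM, Matrix.of_apply, dif_pos h1]
        rw [if_neg]
        rw [show y ⟨((⟨(i : ℕ), by omega⟩ : Fin (n+1)) : ℕ), h1⟩ = y i from rfl]
        rw [hrow' i l]
        have := l.2
        omega
      · push_neg at hz
        have hcub : ∀ i : Fin n, c i ≤ n + 1 := by
          intro i
          calc c i ≤ (Finset.univ : Finset (Fin (n+1))).card := Finset.card_le_card
                (Finset.filter_subset _ _)
            _ = n + 1 := by simp
        have := Finset.exists_ne_map_eq_of_card_lt_of_maps_to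
          (s := Finset.univ.filter (fun i : Fin n => (k : ℕ) ≤ (i : ℕ)))
          (t := Finset.Icc ((k : ℕ) + 2) n) (f := c)
          (by
            rw [Nat.card_Icc]
            have hcard : (Finset.univ.filter (fun i : Fin n => (k : ℕ) ≤ (i : ℕ))).card
                = n - (k : ℕ) := by
              rw [show (Finset.univ.filter (fun i : Fin n => (k : ℕ) ≤ (i : ℕ)))
                  = Finset.Ici k by ext m; simp only [Finset.mem_filter, Finset.mem_univ, true_and,
                    Finset.mem_Ici, Fin.le_iff_val_le_val]]
              rw [Fin.card_Ici]
            have := k.2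
            omega)
          (by
            intro i hi
            simp only [Finset.mem_coe, Finset.mem_filter, Finset.mem_univ, true_and] at hi
            simp only [Finset.mem_coe, Finset.mem_Icc]
            refine ⟨hck i hi, ?_⟩
            have h1 := hz i hi
            have h2 := hcub i
            omega)
        obtain ⟨i, _, j, _, hij, hcij⟩ := this
        apply Matrix.det_zero_of_row_eq (i := (⟨i, by omega⟩ : Fin (n+1)))
          (j := (⟨j, by omega⟩ : Fin (n+1)))
        · exact fun h => hij (Fin.ext (by simpa using congrArg Fin.val h))
        · exact hroweq i j hcij

/-- The interlacing indicator as a determinant. -/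
theorem interlacing_indicator_det (N : ℕ) (hN : 1 ≤ N)
    (y : Fin (N - 1) → ℤ) (x : Fin N → ℤ) (hy : StrictMono y) (hx : StrictMono x) :
    (Matrix.of fun i j : Fin N =>
        if h : (i : ℕ) < N - 1 then (if y ⟨i, h⟩ ≤ x j then (1 : ℤ) else 0) else 1).det
      = if ∀ k : Fin (N - 1),
            x ⟨k, by have := k.2; omega⟩ < y k ∧ y k ≤ x ⟨(k : ℕ) + 1, by have := k.2; omega⟩
        then (-1 : ℤ) ^ (N - 1) else 0 := by
  obtain ⟨n, rfl⟩ : ∃ n, N = n + 1 := ⟨N - 1, by omega⟩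
  exact interlacing_det_aux n y x hy hx
end

section
/- Let n ≥ 1, p ∈ ℝ, and define f : ℤ → ℝ by f(−1) = p, f(0) = 1 − p, and f(m) = 0 for m ∉ {−1, 0}. Then for every x ∈ W_n, ∑_{y ∈ W_n} Δ_n(y) · det(f(x_i − y_j))_{i,j=1}^n = Δ_n(x). (The sum is finite, since det(f(x_i − y_j)) ≠ 0 forces each y_j ∈ {x_j, x_j + 1}.) Consequently, for 0 < p < 1, the kernel P_n(x,y) = (Δ_n(y)/Δ_n(x)) det(f(x_i − y_j))_{i,j=1}^n on W_n has row sums equal to 1. -/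
/-- One-step transition weight of a single Bernoulli(p) walker: `f(-1) = p`, `f(0) = 1 - p`,
and `f(m) = 0` otherwise. -/
def bern (p : ℝ) : ℤ → ℝ := fun m => if m = -1 then p else if m = 0 then 1 - p else 0

namespace CharlierAux

open Finset Matrix Polynomial

lemma prod_pairs {n : ℕ} {M : Type*} [CommMonoid M] (f : Fin n → Fin n → M) :
    ∏ p ∈ Finset.univ.filter (fun p : Fin n × Fin n => p.1 < p.2), f p.1 p.2
      = ∏ i, ∏ j ∈ Finset.Ioi i, f i j := by
  rw [Finset.prod_sigma']
  refine Finset.prod_nbij' (fun p => ⟨p.1, p.2⟩) (fun x => (x.1, x.2)) ?_ ?_ ?_ ?_ ?_ <;>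
    simp [Finset.mem_Ioi]

lemma vand_cast {n : ℕ} (y : Fin n → ℤ) :
    ((vandermondeProd y : ℤ) : ℝ) = (Matrix.vandermonde (fun i => (y i : ℝ))).det := by
  rw [vandermondeProd, prod_pairs (fun i j => y j - y i), Matrix.det_vandermonde]
  push_cast
  rfl

lemma vand_zero {n : ℕ} {y : Fin n → ℤ} (h : ¬Function.Injective y) : vandermondeProd y = 0 := by
  simp only [Function.Injective, not_forall] at h
  obtain ⟨i, j, hij, hne⟩ := h
  rcases lt_or_gt_of_ne hne with hlt | hlt
  · exact Finset.prod_eq_zero (Finset.mem_filter.2 ⟨Finset.mem_univ ((i, j) : Fin n × Fin n), hlt⟩)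
      (by rw [hij, sub_self])
  · exact Finset.prod_eq_zero (Finset.mem_filter.2 ⟨Finset.mem_univ ((j, i) : Fin n × Fin n), hlt⟩)
      (by rw [hij, sub_self])

lemma vand_pos {n : ℕ} {x : Fin n → ℤ} (hx : StrictMono x) : 0 < vandermondeProd x :=
  Finset.prod_pos fun q hq => sub_pos.2 (hx (Finset.mem_filter.1 hq).2)

/-- The finite set `{x_1, …, x_n, x_1+1, …, x_n+1}`. -/
def Tset (n : ℕ) (x : Fin n → ℤ) : Finset ℤ :=
  (Finset.image x Finset.univ) ∪ (Finset.image (fun i => x i + 1) Finset.univ)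

/-- The summand `Δ_n(y) · det(f(x_i - y_j))`. -/
noncomputable def gfun (n : ℕ) (p : ℝ) (x : Fin n → ℤ) : (Fin n → ℤ) → ℝ :=
  fun y => (vandermondeProd y : ℝ) * (Matrix.of fun i j : Fin n => bern p (x i - y j)).det

/-- Strictly monotone vectors with entries in `Tset n x`. -/
noncomputable def Sset (n : ℕ) (x : Fin n → ℤ) : Finset (Fin n → ℤ) :=
  (Fintype.piFinset fun _ : Fin n => Tset n x).filter (fun y => StrictMono y)

/-- The Andréief matrix `M_{a b} = ∑_{t ∈ T} t^a f(x_b - t)`. -/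
noncomputable def Mmat (n : ℕ) (p : ℝ) (x : Fin n → ℤ) : Matrix (Fin n) (Fin n) ℝ :=
  Matrix.of fun a b : Fin n => ∑ t ∈ Tset n x, (t : ℝ) ^ (a : ℕ) * bern p (x b - t)

lemma sign_sq {n : ℕ} (τ : Equiv.Perm (Fin n)) :
    ((Equiv.Perm.sign τ : ℤ) : ℝ) * ((Equiv.Perm.sign τ : ℤ) : ℝ) = 1 := by
  rcases Int.units_eq_one_or (Equiv.Perm.sign τ) with h | h <;> rw [h] <;> norm_num

lemma gfun_perm {n : ℕ} (p : ℝ) (x : Fin n → ℤ) (z : Fin n → ℤ) (σ : Equiv.Perm (Fin n)) :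
    gfun n p x (z ∘ σ) = gfun n p x z := by
  have h1 : ((vandermondeProd (z ∘ σ) : ℤ) : ℝ)
      = ((Equiv.Perm.sign σ : ℤ) : ℝ) * ((vandermondeProd z : ℤ) : ℝ) := by
    rw [vand_cast, vand_cast]
    have he : (Matrix.vandermonde fun i => ((z ∘ σ) i : ℝ))
        = (Matrix.vandermonde fun i => (z i : ℝ)).submatrix σ id := by
      ext i j; simp [Matrix.vandermonde, Matrix.submatrix]
    rw [he, Matrix.det_permute]
  have h2 : (Matrix.of fun i j : Fin n => bern p (x i - (z ∘ σ) j)).det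
      = ((Equiv.Perm.sign σ : ℤ) : ℝ) * (Matrix.of fun i j : Fin n => bern p (x i - z j)).det := by
    have he : (Matrix.of fun i j : Fin n => bern p (x i - (z ∘ σ) j))
        = (Matrix.of fun i j : Fin n => bern p (x i - z j)).submatrix id σ := rfl
    rw [he, Matrix.det_permute']
  unfold gfun
  rw [h1, h2, mul_mul_mul_comm, sign_sq, one_mul]

lemma gfun_supp {n : ℕ} (p : ℝ) (x : Fin n → ℤ) {y : Fin n → ℤ} (hy : gfun n p x y ≠ 0) :
    ∀ j, y j ∈ Tset n x := by
  intro j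
  by_contra hj
  apply hy
  have hdet : (Matrix.of fun i j : Fin n => bern p (x i - y j)).det = 0 := by
    apply Matrix.det_eq_zero_of_column_eq_zero j
    intro i
    have h1 : y j ≠ x i + 1 := fun h => hj (Finset.mem_union_right _
      (Finset.mem_image.2 ⟨i, Finset.mem_univ i, h.symm⟩))
    have h2 : y j ≠ x i := fun h => hj (Finset.mem_union_left _
      (Finset.mem_image.2 ⟨i, Finset.mem_univ i, h.symm⟩))
    show bern p (x i - y j) = 0
    unfold bern
    split_ifs with ha hb
    · exfalso; omega
    · exfalso; omega
    · rfl
  unfold gfun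
  rw [hdet, mul_zero]

lemma step2 (n : ℕ) (p : ℝ) (x : Fin n → ℤ) :
    ∑ y ∈ Fintype.piFinset (fun _ : Fin n => Tset n x), gfun n p x y
      = (Fintype.card (Equiv.Perm (Fin n)) : ℝ) * ∑ y ∈ Sset n x, gfun n p x y := by
  classical
  have hbij : ∑ q ∈ (Sset n x) ×ˢ (Finset.univ : Finset (Equiv.Perm (Fin n))),
        gfun n p x (q.1 ∘ q.2)
      = ∑ y ∈ Fintype.piFinset (fun _ : Fin n => Tset n x), gfun n p x y := by
    refine Finset.sum_bij_ne_zero (fun q _ _ => q.1 ∘ q.2) ?_ ?_ ?_ ?_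
    · -- maps into piFinset
      rintro ⟨z, σ⟩ hq -
      have hz := (Finset.mem_product.1 hq).1
      rw [Sset, Finset.mem_filter, Fintype.mem_piFinset] at hz
      exact Fintype.mem_piFinset.2 fun j => hz.1 (σ j)
    · -- injective
      intro a₁ h₁ _ a₂ h₂ _ hEQ
      obtain ⟨z₁, σ₁⟩ := a₁
      obtain ⟨z₂, σ₂⟩ := a₂
      have hEQ' : z₁ ∘ ⇑σ₁ = z₂ ∘ ⇑σ₂ := hEQ
      have hz₁ := (Finset.mem_product.1 h₁).1
      have hz₂ := (Finset.mem_product.1 h₂).1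
      rw [Sset, Finset.mem_filter] at hz₁ hz₂
      have hm₁ : StrictMono z₁ := hz₁.2
      have hm₂ : StrictMono z₂ := hz₂.2
      set y : Fin n → ℤ := z₁ ∘ σ₁ with hy
      have hyinj : Function.Injective y := hm₁.injective.comp σ₁.injective
      have hcard : (Finset.image y Finset.univ).card = n := by
        rw [Finset.card_image_of_injective _ hyinj, Finset.card_univ, Fintype.card_fin]
      have hmemz₁ : ∀ i, z₁ i ∈ Finset.image y Finset.univ := by
        intro i
        refine Finset.mem_image.2 ⟨σ₁.symm i, Finset.mem_univ _, ?_⟩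
        simp [hy]
      have hmemz₂ : ∀ i, z₂ i ∈ Finset.image y Finset.univ := by
        intro i
        refine Finset.mem_image.2 ⟨σ₂.symm i, Finset.mem_univ _, ?_⟩
        show y (σ₂.symm i) = z₂ i
        rw [hEQ']
        simp
      have he₁ := Finset.orderEmbOfFin_unique hcard hmemz₁ hm₁
      have he₂ := Finset.orderEmbOfFin_unique hcard hmemz₂ hm₂
      have hzz : z₁ = z₂ := he₁.trans he₂.symm
      have hσ : σ₁ = σ₂ := by
        apply Equiv.ext
        intro j
        apply hm₁.injective
        have hj := congrFun hEQ' j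
        rw [← hzz] at hj
        exact hj
      simp [Prod.ext_iff, hzz, hσ]
    · -- surjective
      intro y hy hgy
      have hyinj : Function.Injective y := by
        by_contra h
        exact hgy (by unfold gfun; rw [vand_zero h]; push_cast; ring)
      have hcard : (Finset.image y Finset.univ).card = n := by
        rw [Finset.card_image_of_injective _ hyinj, Finset.card_univ, Fintype.card_fin]
      set s₀ := Finset.image y Finset.univ with hs₀
      set z : Fin n → ℤ := fun i => (s₀.orderEmbOfFin hcard i : ℤ) with hz
      have hymem : ∀ j, y j ∈ s₀ := fun j => Finset.mem_image.2 ⟨j, Finset.mem_univ j, rfl⟩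
      set σfun : Fin n → Fin n := fun j => (s₀.orderIsoOfFin hcard).symm ⟨y j, hymem j⟩ with hσf
      have hσinj : Function.Injective σfun := by
        intro j j' h
        apply hyinj
        have := congrArg (fun t => ((s₀.orderIsoOfFin hcard) t : ℤ)) h
        simpa [hσf] using this
      have hσbij : Function.Bijective σfun := Finite.injective_iff_bijective.1 hσinj
      set σ : Equiv.Perm (Fin n) := Equiv.ofBijective σfun hσbij with hσ
      have hcomp : z ∘ σ = y := by
        funext j
        show z (σfun j) = y j
        rw [hz]
        simp only [hσf]
        rw [← Finset.coe_orderIsoOfFin_apply]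
        rw [OrderIso.apply_symm_apply]
      have hzS : z ∈ Sset n x := by
        rw [Sset, Finset.mem_filter]
        constructor
        · refine Fintype.mem_piFinset.2 fun i => ?_
          have h1 : z i ∈ s₀ := by rw [hz]; exact Finset.orderEmbOfFin_mem _ _ _
          rw [hs₀] at h1
          obtain ⟨j, -, hj⟩ := Finset.mem_image.1 h1
          rw [← hj]
          exact Fintype.mem_piFinset.1 hy j
        · rw [hz]; exact (s₀.orderEmbOfFin hcard).strictMono
      refine ⟨(z, σ), Finset.mem_product.2 ⟨hzS, Finset.mem_univ σ⟩, ?_, hcomp⟩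
      show gfun n p x (z ∘ σ) ≠ 0
      rw [hcomp]; exact hgy
    · intro a h₁ h₂; rfl
  rw [← hbij, Finset.sum_product]
  have hrow : ∀ z ∈ Sset n x, ∑ σ : Equiv.Perm (Fin n), gfun n p x (z ∘ σ)
      = (Fintype.card (Equiv.Perm (Fin n)) : ℝ) * gfun n p x z := by
    intro z _
    rw [Finset.sum_congr rfl fun σ _ => gfun_perm p x z σ, Finset.sum_const, Finset.card_univ,
      nsmul_eq_mul]
  rw [Finset.sum_congr rfl hrow, ← Finset.mul_sum]

lemma step3 (n : ℕ) (p : ℝ) (x : Fin n → ℤ) :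
    ∑ y ∈ Fintype.piFinset (fun _ : Fin n => Tset n x), gfun n p x y
      = (Fintype.card (Equiv.Perm (Fin n)) : ℝ) * (Mmat n p x).det := by
  classical
  have expand : ∀ y : Fin n → ℤ, gfun n p x y
      = ∑ τ : Equiv.Perm (Fin n), ∑ σ : Equiv.Perm (Fin n),
          (((Equiv.Perm.sign τ : ℤ) : ℝ) * ((Equiv.Perm.sign σ : ℤ) : ℝ)) *
            ∏ j : Fin n, ((y j : ℝ) ^ ((τ j : ℕ)) * bern p (x (σ j) - y j)) := by
    intro y
    unfold gfun
    rw [vand_cast, ← Matrix.det_transpose (Matrix.vandermonde _), Matrix.det_apply',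
      Matrix.det_apply', Finset.sum_mul_sum]
    refine Finset.sum_congr rfl fun τ _ => Finset.sum_congr rfl fun σ _ => ?_
    rw [Finset.prod_mul_distrib]
    simp only [Matrix.transpose_apply, Matrix.vandermonde_apply, Matrix.of_apply]
    ring
  calc
    ∑ y ∈ Fintype.piFinset (fun _ : Fin n => Tset n x), gfun n p x y
        = ∑ y ∈ Fintype.piFinset (fun _ : Fin n => Tset n x),
            ∑ τ : Equiv.Perm (Fin n), ∑ σ : Equiv.Perm (Fin n),
              (((Equiv.Perm.sign τ : ℤ) : ℝ) * ((Equiv.Perm.sign σ : ℤ) : ℝ)) *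
                ∏ j : Fin n, ((y j : ℝ) ^ ((τ j : ℕ)) * bern p (x (σ j) - y j)) :=
      Finset.sum_congr rfl fun y _ => expand y
    _ = ∑ τ : Equiv.Perm (Fin n), ∑ σ : Equiv.Perm (Fin n),
          (((Equiv.Perm.sign τ : ℤ) : ℝ) * ((Equiv.Perm.sign σ : ℤ) : ℝ)) *
            ∑ y ∈ Fintype.piFinset (fun _ : Fin n => Tset n x),
              ∏ j : Fin n, ((y j : ℝ) ^ ((τ j : ℕ)) * bern p (x (σ j) - y j)) := by
      rw [Finset.sum_comm]
      refine Finset.sum_congr rfl fun τ _ => ?_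
      rw [Finset.sum_comm]
      exact Finset.sum_congr rfl fun σ _ => (Finset.mul_sum _ _ _).symm
    _ = ∑ τ : Equiv.Perm (Fin n), ∑ σ : Equiv.Perm (Fin n),
          (((Equiv.Perm.sign τ : ℤ) : ℝ) * ((Equiv.Perm.sign σ : ℤ) : ℝ)) *
            ∏ j : Fin n, Mmat n p x (τ j) (σ j) := by
      refine Finset.sum_congr rfl fun τ _ => Finset.sum_congr rfl fun σ _ => ?_
      have hps := Finset.prod_univ_sum (fun _ : Fin n => Tset n x)
        (fun j t => (t : ℝ) ^ ((τ j : ℕ)) * bern p (x (σ j) - t))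
      rw [← hps]
      rfl
    _ = ∑ τ : Equiv.Perm (Fin n), ((Equiv.Perm.sign τ : ℤ) : ℝ) *
          (((Equiv.Perm.sign τ : ℤ) : ℝ) * (Mmat n p x).det) := by
      refine Finset.sum_congr rfl fun τ _ => ?_
      have hdet : ∑ σ : Equiv.Perm (Fin n),
          ((Equiv.Perm.sign σ : ℤ) : ℝ) * ∏ j : Fin n, Mmat n p x (τ j) (σ j)
          = ((Equiv.Perm.sign τ : ℤ) : ℝ) * (Mmat n p x).det := by
        have h1 : ∑ σ : Equiv.Perm (Fin n),
            ((Equiv.Perm.sign σ : ℤ) : ℝ) * ∏ j : Fin n, Mmat n p x (τ j) (σ j)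
            = (((Mmat n p x).submatrix τ id)ᵀ).det := by
          rw [Matrix.det_apply']
          rfl
        rw [h1, Matrix.det_transpose, Matrix.det_permute]
      rw [← hdet, Finset.mul_sum]
      exact Finset.sum_congr rfl fun σ _ => by ring
    _ = ∑ _τ : Equiv.Perm (Fin n), (Mmat n p x).det := by
      refine Finset.sum_congr rfl fun τ _ => ?_
      rw [← mul_assoc, sign_sq, one_mul]
    _ = (Fintype.card (Equiv.Perm (Fin n)) : ℝ) * (Mmat n p x).det := by
      rw [Finset.sum_const, Finset.card_univ, nsmul_eq_mul]

noncomputable def qpoly (p : ℝ) (k : ℕ) : ℝ[X] := C (1-p) * X^k + C p * (X + C 1)^k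

lemma qpoly_eq (p : ℝ) (k : ℕ) :
    qpoly p k = X^k + C p * ((X + C 1)^k - X^k) := by
  unfold qpoly; rw [C_sub, C_1]; ring

lemma deg_lt (p : ℝ) (k : ℕ) :
    (C p * ((X + C 1 : ℝ[X])^k - X^k)).degree < (X^k : ℝ[X]).degree := by
  have ha : ((X + C 1 : ℝ[X])^k).Monic := (monic_X_add_C 1).pow k
  have hd : ((X + C 1 : ℝ[X])^k).degree = ((X : ℝ[X])^k).degree := by
    rw [degree_X_pow, degree_eq_natDegree ha.ne_zero,
      (monic_X_add_C (1:ℝ)).natDegree_pow, natDegree_X_add_C, mul_one]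
  have hsub : ((X + C 1 : ℝ[X])^k - X^k).degree < ((X + C 1 : ℝ[X])^k).degree :=
    degree_sub_lt hd ha.ne_zero (by rw [ha.leadingCoeff, (monic_X_pow k).leadingCoeff])
  refine lt_of_le_of_lt ?_ (hd ▸ hsub)
  rw [← smul_eq_C_mul]
  exact degree_smul_le p _

lemma qpoly_monic (p : ℝ) (k : ℕ) : (qpoly p k).Monic := by
  rw [qpoly_eq]
  exact (monic_X_pow k).add_of_left (deg_lt p k)

lemma qpoly_natDegree (p : ℝ) (k : ℕ) : (qpoly p k).natDegree = k := by
  have h : (qpoly p k).degree = (k : WithBot ℕ) := by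
    rw [qpoly_eq, degree_add_eq_left_of_degree_lt (deg_lt p k), degree_X_pow]
  exact natDegree_eq_of_degree_eq_some h

lemma qpoly_eval (p : ℝ) (k : ℕ) (t : ℝ) : (qpoly p k).eval t = (1-p) * t^k + p * (t+1)^k := by
  simp [qpoly]

lemma Mmat_entry (n : ℕ) (p : ℝ) (x : Fin n → ℤ) (a b : Fin n) :
    Mmat n p x a b = (qpoly p (a : ℕ)).eval ((x b : ℤ) : ℝ) := by
  rw [qpoly_eval]
  show ∑ t ∈ Tset n x, (t : ℝ) ^ (a : ℕ) * bern p (x b - t) = _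
  have hpair : ({x b, x b + 1} : Finset ℤ) ⊆ Tset n x := by
    intro t ht
    rcases Finset.mem_insert.1 ht with h | h
    · exact Finset.mem_union_left _ (Finset.mem_image.2 ⟨b, Finset.mem_univ b, h.symm⟩)
    · rw [Finset.mem_singleton] at h
      exact Finset.mem_union_right _ (Finset.mem_image.2 ⟨b, Finset.mem_univ b, h.symm⟩)
  rw [← Finset.sum_subset hpair ?_]
  · rw [Finset.sum_pair (by omega : (x b : ℤ) ≠ x b + 1)]
    have h0 : bern p (x b - x b) = 1 - p := by simp [bern]
    have h1 : bern p (x b - (x b + 1)) = p := by norm_num [bern]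
    rw [h0, h1]
    push_cast
    ring
  · intro t ht hnt
    simp only [Finset.mem_insert, Finset.mem_singleton, not_or] at hnt
    have hb : bern p (x b - t) = 0 := by
      unfold bern
      split_ifs with h1 h2
      · exfalso; omega
      · exfalso; omega
      · rfl
    rw [hb, mul_zero]

lemma Mmat_det (n : ℕ) (p : ℝ) (x : Fin n → ℤ) :
    (Mmat n p x).det = ((vandermondeProd x : ℤ) : ℝ) := by
  have hvd := Matrix.det_eval_matrixOfPolynomials_eq_det_vandermonde
    (fun i => ((x i : ℤ) : ℝ)) (fun j : Fin n => qpoly p (j : ℕ))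
    (fun i => qpoly_natDegree p (i : ℕ)) (fun i => qpoly_monic p (i : ℕ))
  rw [vand_cast x, hvd, ← Matrix.det_transpose (Matrix.of _)]
  congr 1
  ext a b
  rw [Matrix.transpose_apply, Matrix.of_apply, Mmat_entry]

end CharlierAux

open CharlierAux

/-- For every `x ∈ W_n`, `∑_{y ∈ W_n} Δ_n(y) det(f(x_i - y_j)) = Δ_n(x)`; consequently, for
`0 < p < 1`, the discrete-time Charlier transition kernel
`P_n(x,y) = (Δ_n(y)/Δ_n(x)) det(f(x_i - y_j))` has row sums equal to `1`. -/
theorem charlier_row_sum (n : ℕ) (hn : 1 ≤ n) (p : ℝ) (x : Fin n → ℤ) (hx : StrictMono x) :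
    ((∑ᶠ y ∈ {y : Fin n → ℤ | StrictMono y},
        (vandermondeProd y : ℝ) * (Matrix.of fun i j : Fin n => bern p (x i - y j)).det)
      = (vandermondeProd x : ℝ))
    ∧ (0 < p → p < 1 →
        (∑ᶠ y ∈ {y : Fin n → ℤ | StrictMono y},
            ((vandermondeProd y : ℝ) / (vandermondeProd x : ℝ)) *
              (Matrix.of fun i j : Fin n => bern p (x i - y j)).det)
          = 1) := by
  classical
  have hcard0 : (Fintype.card (Equiv.Perm (Fin n)) : ℝ) ≠ 0 :=
    Nat.cast_ne_zero.2 Fintype.card_ne_zero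
  have hmain : ∑ y ∈ Sset n x, gfun n p x y = ((vandermondeProd x : ℤ) : ℝ) := by
    have h := mul_left_cancel₀ hcard0 ((step2 n p x).symm.trans (step3 n p x))
    rw [h, Mmat_det]
  have hΔ : ((vandermondeProd x : ℤ) : ℝ) ≠ 0 := by
    exact_mod_cast (vand_pos hx).ne'
  have hsum1 : (∑ᶠ y ∈ {y : Fin n → ℤ | StrictMono y}, gfun n p x y)
      = ∑ y ∈ Sset n x, gfun n p x y := by
    apply finsum_mem_eq_sum_of_subset
    · rintro y ⟨hySM, hy⟩
      rw [Function.mem_support] at hy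
      rw [Finset.mem_coe, Sset, Finset.mem_filter]
      exact ⟨Fintype.mem_piFinset.2 (gfun_supp p x hy), hySM⟩
    · intro y hy
      rw [Finset.mem_coe, Sset, Finset.mem_filter] at hy
      exact hy.2
  constructor
  · exact hsum1.trans hmain
  · intro _ _
    have hcongr : (∑ᶠ y ∈ {y : Fin n → ℤ | StrictMono y},
          ((vandermondeProd y : ℝ) / (vandermondeProd x : ℝ)) *
            (Matrix.of fun i j : Fin n => bern p (x i - y j)).det)
        = ∑ᶠ y ∈ {y : Fin n → ℤ | StrictMono y},
            ((vandermondeProd x : ℝ))⁻¹ * gfun n p x y :=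
      finsum_mem_congr rfl fun y _ => by unfold gfun; ring
    rw [hcongr]
    have hsum2 : (∑ᶠ y ∈ {y : Fin n → ℤ | StrictMono y},
          ((vandermondeProd x : ℝ))⁻¹ * gfun n p x y)
        = ∑ y ∈ Sset n x, ((vandermondeProd x : ℝ))⁻¹ * gfun n p x y := by
      apply finsum_mem_eq_sum_of_subset
      · rintro y ⟨hySM, hy⟩
        rw [Function.mem_support] at hy
        have hgy : gfun n p x y ≠ 0 := right_ne_zero_of_mul hy
        rw [Finset.mem_coe, Sset, Finset.mem_filter]
        exact ⟨Fintype.mem_piFinset.2 (gfun_supp p x hgy), hySM⟩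
      · intro y hy
        rw [Finset.mem_coe, Sset, Finset.mem_filter] at hy
        exact hy.2
    rw [hsum2, ← Finset.mul_sum, hmain, inv_mul_cancel₀ hΔ]
end

section
/- Let S_1, …, S_n be finite nonempty sets, let P_k : S_k × S_k → ℝ_{≥0} be stochastic matrices (∑_y P_k(x,y) = 1), and let Λᵏ_{k−1} : S_k × S_{k−1} → ℝ_{≥0} be stochastic links (∑_y Λᵏ_{k−1}(x,y) = 1) satisfying the intertwining relation P_k Λᵏ_{k−1} = Λᵏ_{k−1} P_{k−1} =: Δᵏ_{k−1} for 2 ≤ k ≤ n. Define the sequential-update kernel on S_1 × ⋯ × S_n by P^n_Λ(X, Y) = P_1(x^1, y^1) ∏_{k=2}^n P_k(x^k, y^k) Λᵏ_{k−1}(y^k, y^{k−1}) / Δᵏ_{k−1}(x^k, y^{k−1}) when all Δᵏ_{k−1}(x^k, y^{k−1}) > 0, and P^n_Λ(X,Y) = 0 otherwise. Let μ_n be a probability measure on S_n and define M_n(X) = μ_n(x^n) ∏_{k=2}^n Λᵏ_{k−1}(x^k, x^{k−1}). Then for every Y = (y^1,…,y^n), ∑_X M_n(X) P^n_Λ(X,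 Y) = (μ_n P_n)(y^n) · ∏_{k=2}^n Λᵏ_{k−1}(y^k, y^{k−1}). In particular measures of the product form M_n are preserved by the dynamics P^n_Λ, with the top marginal evolving by P_n. -/
open Classical

/-- `Δᵏ⁺¹_k = P_{k+1} Λᵏ⁺¹_k`, the intertwined kernel from level `k+1` to level `k`. -/
noncomputable def DDk (S : ℕ → Type) [∀ k, Fintype (S k)]
    (P : ∀ k, S k → S k → ℝ) (Λ : ∀ k, S (k + 1) → S k → ℝ)
    (k : ℕ) (x : S (k + 1)) (y : S k) : ℝ :=
  ∑ z : S (k + 1), P (k + 1) x z * Λ k z y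

/-- Configurations on levels `0, 1, …, n`. -/
abbrev Cfg (S : ℕ → Type) (n : ℕ) := ∀ k : Fin (n + 1), S k

/-- The sequential-update transition kernel `P^n_Λ` on configurations:
`P^n_Λ(X,Y) = P_0(x⁰,y⁰) ∏_k P_{k+1}(x^{k+1},y^{k+1}) Λ(y^{k+1},y^k) / Δ(x^{k+1},y^k)`
when all `Δ(x^{k+1},y^k) > 0`, and `0` otherwise. -/
noncomputable def seqPL (S : ℕ → Type) [∀ k, Fintype (S k)]
    (P : ∀ k, S k → S k → ℝ) (Λ : ∀ k, S (k + 1) → S k → ℝ)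
    (n : ℕ) (X Y : Cfg S n) : ℝ :=
  if ∀ k : Fin n, 0 < DDk S P Λ k (X k.succ) (Y k.castSucc) then
    P 0 (X 0) (Y 0) *
      ∏ k : Fin n,
        (P ((k : ℕ) + 1) (X k.succ) (Y k.succ) * Λ k (Y k.succ) (Y k.castSucc)
          / DDk S P Λ k (X k.succ) (Y k.castSucc))
  else 0

lemma DDk_nonneg {S : ℕ → Type} [∀ k, Fintype (S k)]
    {P : ∀ k, S k → S k → ℝ} {Λ : ∀ k, S (k + 1) → S k → ℝ} {k : ℕ}
    {x : S (k + 1)} {y : S k}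
    (hP : ∀ z, 0 ≤ P (k + 1) x z) (hΛ : ∀ z, 0 ≤ Λ k z y) :
    0 ≤ DDk S P Λ k x y :=
  Finset.sum_nonneg fun z _ => mul_nonneg (hP z) (hΛ z)

lemma DDk_zero {S : ℕ → Type} [∀ k, Fintype (S k)]
    {P : ∀ k, S k → S k → ℝ} {Λ : ∀ k, S (k + 1) → S k → ℝ} {k : ℕ}
    {x : S (k + 1)} {y : S k}
    (hP : ∀ z, 0 ≤ P (k + 1) x z) (hΛ : ∀ z, 0 ≤ Λ k z y)
    (h : DDk S P Λ k x y = 0) (z : S (k + 1)) :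
    P (k + 1) x z * Λ k z y = 0 :=
  (Finset.sum_eq_zero_iff_of_nonneg
    (fun z _ => mul_nonneg (hP z) (hΛ z))).mp h z (Finset.mem_univ z)

lemma div_mul_cancel_aux {a b : ℝ} (h : b = 0 → a = 0) : a / b * b = a := by
  rcases eq_or_ne b 0 with h0 | h0
  · rw [h0, mul_zero, h h0]
  · rw [div_mul_cancel₀ _ h0]

lemma seqPL_eq (S : ℕ → Type) [∀ k, Fintype (S k)]
    (P : ∀ k, S k → S k → ℝ) (Λ : ∀ k, S (k + 1) → S k → ℝ) (n : ℕ)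
    (hP : ∀ k ≤ n, ∀ x y, 0 ≤ P k x y) (hΛ : ∀ k < n, ∀ x y, 0 ≤ Λ k x y)
    (X Y : Cfg S n) :
    seqPL S P Λ n X Y = P 0 (X 0) (Y 0) *
      ∏ k : Fin n,
        (P ((k : ℕ) + 1) (X k.succ) (Y k.succ) * Λ k (Y k.succ) (Y k.castSucc)
          / DDk S P Λ k (X k.succ) (Y k.castSucc)) := by
  unfold seqPL
  split_ifs with h
  · rfl
  · push_neg at h
    obtain ⟨k, hk⟩ := h
    have h0 : DDk S P Λ k (X k.succ) (Y k.castSucc) = 0 :=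
      le_antisymm hk (DDk_nonneg (fun z => hP _ k.2 _ _) (fun z => hΛ _ k.2 _ _))
    rw [Finset.prod_eq_zero (Finset.mem_univ k) (by rw [h0, div_zero]), mul_zero]


/-- Measures of the product form `M_n(X) = μ_n(xⁿ) ∏_k Λ(x^{k+1}, x^k)` are preserved by the
sequential-update dynamics `P^n_Λ`, the top marginal evolving by `P_n`:
`(M_n P^n_Λ)(Y) = (μ_n P_n)(yⁿ) ∏_k Λ(y^{k+1}, y^k)`. -/
theorem conserved_measures (S : ℕ → Type) [∀ k, Fintype (S k)] [∀ k, Nonempty (S k)]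
    (P : ∀ k, S k → S k → ℝ) (Λ : ∀ k, S (k + 1) → S k → ℝ) (n : ℕ)
    (hPpos : ∀ k ≤ n, ∀ x y, 0 ≤ P k x y)
    (hPsum : ∀ k ≤ n, ∀ x, ∑ y, P k x y = 1)
    (hΛpos : ∀ k < n, ∀ x y, 0 ≤ Λ k x y)
    (hΛsum : ∀ k < n, ∀ x, ∑ y, Λ k x y = 1)
    (hint : ∀ k < n, ∀ (x : S (k + 1)) (z : S k),
      ∑ y : S (k + 1), P (k + 1) x y * Λ k y z = ∑ w : S k, Λ k x w * P k w z)
    (μ : S n → ℝ) (hμpos : ∀ x, 0 ≤ μ x) (hμsum : ∑ x, μ x = 1)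
    (Y : Cfg S n) :
    ∑ X : Cfg S n,
        (μ (X (Fin.last n)) * ∏ k : Fin n, Λ k (X k.succ) (X k.castSucc)) * seqPL S P Λ n X Y
      = (∑ x : S n, μ x * P n x (Y (Fin.last n))) *
          ∏ k : Fin n, Λ k (Y k.succ) (Y k.castSucc) := by
  revert hPpos hPsum hΛpos hΛsum hint μ hμpos hμsum Y
  induction n with
  | zero =>
    intro hPpos hPsum hΛpos hΛsum hint μ hμpos hμsum Y
    have hcond : ∀ X : Cfg S 0, seqPL S P Λ 0 X Y = P 0 (X 0) (Y 0) := by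
      intro X
      rw [seqPL_eq S P Λ 0 hPpos hΛpos X Y]
      simp
    simp only [hcond, Finset.univ_eq_empty, Finset.prod_empty, mul_one]
    rw [← Equiv.sum_comp (Equiv.piUnique (fun k : Fin 1 => S k)).symm]
    simp [Equiv.piUnique, Fin.last, uniqueElim]
  | succ n ih =>
    intro hPpos hPsum hΛpos hΛsum hint μ hμpos hμsum Y
    simp only [seqPL_eq S P Λ (n + 1) hPpos hΛpos]
    rw [← Equiv.sum_comp (Fin.snocEquiv (fun k : Fin (n + 2) => S k)), Fintype.sum_prod_type]
    simp only [Fin.snocEquiv, Equiv.coe_fn_mk, Fin.snoc_last, Fin.snoc_castSucc,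
      Fin.prod_univ_castSucc, Fin.succ_castSucc, Fin.succ_last, Fin.coe_castSucc, Fin.val_last]
    simp only [show (0 : Fin (n + 2)) = Fin.castSucc 0 from rfl, Fin.snoc_castSucc,
      Nat.succ_eq_add_one]
    have hP' : ∀ k ≤ n, ∀ x y, 0 ≤ P k x y := fun k hk => hPpos k (by omega)
    have hPs' : ∀ k ≤ n, ∀ x, ∑ y, P k x y = 1 := fun k hk => hPsum k (by omega)
    have hΛ' : ∀ k < n, ∀ x y, 0 ≤ Λ k x y := fun k hk => hΛpos k (by omega)
    have hΛs' : ∀ k < n, ∀ x, ∑ y, Λ k x y = 1 := fun k hk => hΛsum k (by omega)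
    have hint' : ∀ k < n, ∀ (x : S (k + 1)) (z : S k),
        ∑ y : S (k + 1), P (k + 1) x y * Λ k y z = ∑ w : S k, Λ k x w * P k w z :=
      fun k hk => hint k (by omega)
    have key : ∀ x : S (n + 1),
        ∑ X' : Cfg S n,
            (Λ n x (X' (Fin.last n)) * ∏ k : Fin n, Λ k (X' k.succ) (X' k.castSucc)) *
              seqPL S P Λ n X' (fun k => Y k.castSucc)
          = DDk S P Λ n x (Y (Fin.last n).castSucc) *
              ∏ k : Fin n, Λ k (Y k.succ.castSucc) (Y k.castSucc.castSucc) := by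
      intro x
      rw [ih hP' hPs' hΛ' hΛs' hint' (Λ n x) (fun z => hΛpos n (by omega) x z)
        (hΛsum n (by omega) x) (fun k => Y k.castSucc)]
      rw [← hint n (by omega) x (Y (Fin.last n).castSucc)]
      rfl
    have hsnoc0 : ∀ (x : S (n + 1)) (X' : Cfg S n),
        (Fin.snoc X' x : Cfg S (n + 1)) 0 = X' 0 := by
      intro x X'
      exact Fin.snoc_castSucc (α := fun k : Fin (n + 2) => S k) (p := X') (x := x) (i := 0)
    simp only [hsnoc0]
    have cancel : ∀ x : S (n + 1),
        P (n + 1) x (Y (Fin.last (n + 1))) * Λ n (Y (Fin.last (n + 1))) (Y (Fin.last n).castSucc) /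
            DDk S P Λ n x (Y (Fin.last n).castSucc) * DDk S P Λ n x (Y (Fin.last n).castSucc)
          = P (n + 1) x (Y (Fin.last (n + 1))) * Λ n (Y (Fin.last (n + 1))) (Y (Fin.last n).castSucc) :=
      fun x => div_mul_cancel_aux (fun h => DDk_zero (fun z => hPpos (n + 1) le_rfl x z)
        (fun z => hΛpos n (by omega) z _) h (Y (Fin.last (n + 1))))
    rw [Finset.sum_mul]
    apply Finset.sum_congr rfl
    intro x _
    have lhs_eq : ∑ X' : Cfg S n,
        μ x * ((∏ k : Fin n, Λ k (X' k.succ) (X' k.castSucc)) * Λ n x (X' (Fin.last n))) *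
          (P 0 (X' 0) (Y 0) *
            ((∏ k : Fin n,
                P ((k : ℕ) + 1) (X' k.succ) (Y k.succ.castSucc) * Λ k (Y k.succ.castSucc) (Y k.castSucc.castSucc) /
                  DDk S P Λ k (X' k.succ) (Y k.castSucc.castSucc)) *
              (P (n + 1) x (Y (Fin.last (n + 1))) * Λ n (Y (Fin.last (n + 1))) (Y (Fin.last n).castSucc) /
                DDk S P Λ n x (Y (Fin.last n).castSucc))))
      = μ x * (P (n + 1) x (Y (Fin.last (n + 1))) * Λ n (Y (Fin.last (n + 1))) (Y (Fin.last n).castSucc) /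
            DDk S P Λ n x (Y (Fin.last n).castSucc)) *
          ∑ X' : Cfg S n,
            (Λ n x (X' (Fin.last n)) * ∏ k : Fin n, Λ k (X' k.succ) (X' k.castSucc)) *
              seqPL S P Λ n X' (fun k => Y k.castSucc) := by
      rw [Finset.mul_sum]
      apply Finset.sum_congr rfl
      intro X' _
      simp only [seqPL_eq S P Λ n hP' hΛ' X' (fun k => Y k.castSucc), Fin.castSucc_zero]
      ring
    rw [lhs_eq, key x]
    linear_combination
      (μ x * ∏ k : Fin n, Λ k (Y k.succ.castSucc) (Y k.castSucc.castSucc)) * cancel x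
end

section
/- In the setting of the intertwined Markov chains (finite sets S_1,…,S_n, stochastic matrices P_k, stochastic links Λᵏ_{k−1} with P_k Λᵏ_{k−1} = Λᵏ_{k−1} P_{k−1} = Δᵏ_{k−1}, and sequential-update kernel P^n_Λ), the kernel P^n_Λ is stochastic on the set of allowed configurations: for every X = (x^1,…,x^n) with Λᵏ_{k−1}(x^k, x^{k−1}) > 0 for all 2 ≤ k ≤ n, one has ∑_Y P^n_Λ(X, Y) = 1. -/
open Classical

/-- per-factor kernel -/
noncomputable def Gk (S : ℕ → Type) [∀ k, Fintype (S k)]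
    (P : ∀ k, S k → S k → ℝ) (Λ : ∀ k, S (k + 1) → S k → ℝ)
    (n : ℕ) (X : Cfg S n) (k : ℕ) (a : S k) (b : S (k + 1)) : ℝ :=
  if h : k < n then
    (if 0 < DDk S P Λ k (X ⟨k + 1, Nat.succ_lt_succ h⟩) a then
      P (k + 1) (X ⟨k + 1, Nat.succ_lt_succ h⟩) b * Λ k b a
        / DDk S P Λ k (X ⟨k + 1, Nat.succ_lt_succ h⟩) a
    else 0)
  else 0

/-- indicator of positivity of `Δ` -/
noncomputable def Ik (S : ℕ → Type) [∀ k, Fintype (S k)]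
    (P : ∀ k, S k → S k → ℝ) (Λ : ∀ k, S (k + 1) → S k → ℝ)
    (n : ℕ) (X : Cfg S n) (m : ℕ) (b : S m) : ℝ :=
  if h : m < n then
    (if 0 < DDk S P Λ m (X ⟨m + 1, Nat.succ_lt_succ h⟩) b then 1 else 0)
  else 1

lemma Gk_fin (S : ℕ → Type) [∀ k, Fintype (S k)] (P : ∀ k, S k → S k → ℝ)
    (Λ : ∀ k, S (k + 1) → S k → ℝ) (n : ℕ) (X : Cfg S n) (k : Fin n)
    (a : S k) (b : S (k + 1)) :
    Gk S P Λ n X k a b =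
      (if 0 < DDk S P Λ k (X k.succ) a then
        P ((k : ℕ) + 1) (X k.succ) b * Λ k b a / DDk S P Λ k (X k.succ) a
      else 0) := by
  rw [Gk, dif_pos k.isLt]
  rfl

lemma Pzero (S : ℕ → Type) [∀ k, Fintype (S k)]
    (P : ∀ k, S k → S k → ℝ) (Λ : ∀ k, S (k + 1) → S k → ℝ) (n : ℕ)
    (hPpos : ∀ k ≤ n, ∀ x y, 0 ≤ P k x y)
    (hΛpos : ∀ k < n, ∀ x y, 0 ≤ Λ k x y)
    (hint : ∀ k < n, ∀ (x : S (k + 1)) (z : S k),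
      ∑ y : S (k + 1), P (k + 1) x y * Λ k y z = ∑ w : S k, Λ k x w * P k w z)
    (X : Cfg S n) (hX : ∀ k : Fin n, 0 < Λ k (X k.succ) (X k.castSucc))
    (k : ℕ) (hk : k < n) (b : S k)
    (h : ¬ 0 < DDk S P Λ k (X ⟨k + 1, Nat.succ_lt_succ hk⟩) b) :
    P k (X ⟨k, Nat.lt_succ_of_lt hk⟩) b = 0 := by
  have hnn : ∀ w : S k, 0 ≤ Λ k (X ⟨k + 1, Nat.succ_lt_succ hk⟩) w * P k w b :=
    fun w => mul_nonneg (hΛpos k hk _ w) (hPpos k (le_of_lt hk) w b)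
  have hD : (∑ w : S k, Λ k (X ⟨k + 1, Nat.succ_lt_succ hk⟩) w * P k w b) = 0 := by
    have h1 : DDk S P Λ k (X ⟨k + 1, Nat.succ_lt_succ hk⟩) b
        = ∑ w : S k, Λ k (X ⟨k + 1, Nat.succ_lt_succ hk⟩) w * P k w b :=
      hint k hk _ b
    have h2 : (0:ℝ) ≤ ∑ w : S k, Λ k (X ⟨k + 1, Nat.succ_lt_succ hk⟩) w * P k w b :=
      Finset.sum_nonneg fun w _ => hnn w
    have h3 := not_lt.mp h
    rw [h1] at h3
    exact le_antisymm h3 h2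
  have hterm := (Finset.sum_eq_zero_iff_of_nonneg (fun w _ => hnn w)).mp hD
    (X ⟨k, Nat.lt_succ_of_lt hk⟩) (Finset.mem_univ _)
  have hL : 0 < Λ k (X ⟨k + 1, Nat.succ_lt_succ hk⟩) (X ⟨k, Nat.lt_succ_of_lt hk⟩) :=
    hX ⟨k, hk⟩
  rcases mul_eq_zero.mp hterm with h' | h'
  · exact absurd h' (ne_of_gt hL)
  · exact h'

lemma sumG (S : ℕ → Type) [∀ k, Fintype (S k)]
    (P : ∀ k, S k → S k → ℝ) (Λ : ∀ k, S (k + 1) → S k → ℝ) (n : ℕ)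
    (hPpos : ∀ k ≤ n, ∀ x y, 0 ≤ P k x y)
    (hΛpos : ∀ k < n, ∀ x y, 0 ≤ Λ k x y)
    (hint : ∀ k < n, ∀ (x : S (k + 1)) (z : S k),
      ∑ y : S (k + 1), P (k + 1) x y * Λ k y z = ∑ w : S k, Λ k x w * P k w z)
    (X : Cfg S n) (hX : ∀ k : Fin n, 0 < Λ k (X k.succ) (X k.castSucc))
    (m : ℕ) (hm : m < n) (a : S m) :
    ∑ b : S (m + 1), Gk S P Λ n X m a b * Ik S P Λ n X (m + 1) b
      = Ik S P Λ n X m a := by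
  have h1 : ∀ b : S (m + 1),
      Gk S P Λ n X m a b * Ik S P Λ n X (m + 1) b = Gk S P Λ n X m a b := by
    intro b
    rw [Ik]
    by_cases h2 : m + 1 < n
    · rw [dif_pos h2]
      by_cases h3 : 0 < DDk S P Λ (m + 1) (X ⟨m + 2, Nat.succ_lt_succ h2⟩) b
      · rw [if_pos h3, mul_one]
      · rw [if_neg h3, mul_zero]
        have hz : P (m + 1) (X ⟨m + 1, Nat.lt_succ_of_lt h2⟩) b = 0 :=
          Pzero S P Λ n hPpos hΛpos hint X hX (m + 1) h2 b h3
        have hz' : P (m + 1) (X ⟨m + 1, Nat.succ_lt_succ hm⟩) b = 0 := hz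
        rw [Gk, dif_pos hm]
        rw [hz']
        simp
    · rw [dif_neg h2, mul_one]
  rw [Finset.sum_congr rfl fun b _ => h1 b]
  by_cases hD : 0 < DDk S P Λ m (X ⟨m + 1, Nat.succ_lt_succ hm⟩) a
  · rw [Ik, dif_pos hm, if_pos hD]
    have : ∀ b : S (m + 1), Gk S P Λ n X m a b =
        P (m + 1) (X ⟨m + 1, Nat.succ_lt_succ hm⟩) b * Λ m b a
          / DDk S P Λ m (X ⟨m + 1, Nat.succ_lt_succ hm⟩) a := by
      intro b; rw [Gk, dif_pos hm, if_pos hD]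
    rw [Finset.sum_congr rfl fun b _ => this b, ← Finset.sum_div]
    exact div_self (ne_of_gt hD)
  · rw [Ik, dif_pos hm, if_neg hD]
    have : ∀ b : S (m + 1), Gk S P Λ n X m a b = 0 := by
      intro b; rw [Gk, dif_pos hm, if_neg hD]
    rw [Finset.sum_congr rfl fun b _ => this b, Finset.sum_const, smul_zero]


/-- The sequential-update kernel `P^n_Λ` is stochastic on the set of allowed configurations:
for every configuration `X` with `Λ(x^{k+1}, x^k) > 0` for all `k`, `∑_Y P^n_Λ(X,Y) = 1`. -/
theorem seqPL_stochastic (S : ℕ → Type) [∀ k, Fintype (S k)] [∀ k, Nonempty (S k)]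
    (P : ∀ k, S k → S k → ℝ) (Λ : ∀ k, S (k + 1) → S k → ℝ) (n : ℕ)
    (hPpos : ∀ k ≤ n, ∀ x y, 0 ≤ P k x y)
    (hPsum : ∀ k ≤ n, ∀ x, ∑ y, P k x y = 1)
    (hΛpos : ∀ k < n, ∀ x y, 0 ≤ Λ k x y)
    (hΛsum : ∀ k < n, ∀ x, ∑ y, Λ k x y = 1)
    (hint : ∀ k < n, ∀ (x : S (k + 1)) (z : S k),
      ∑ y : S (k + 1), P (k + 1) x y * Λ k y z = ∑ w : S k, Λ k x w * P k w z)
    (X : Cfg S n) (hX : ∀ k : Fin n, 0 < Λ k (X k.succ) (X k.castSucc)) :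
    ∑ Y : Cfg S n, seqPL S P Λ n X Y = 1 := by
  -- main induction
  have main : ∀ m, m ≤ n →
      ∑ Y : (∀ k : Fin (m + 1), S k),
        (P 0 (X 0) (Y 0) *
          ∏ k : Fin m, Gk S P Λ n X k (Y k.castSucc) (Y k.succ)) *
          Ik S P Λ n X m (Y (Fin.last m)) = 1 := by
    intro m
    induction m with
    | zero =>
      intro _
      refine (Fintype.sum_equiv (Equiv.piUnique fun k : Fin 1 => S k) _
        (fun y => P 0 (X 0) y * Ik S P Λ n X 0 y) ?_).trans ?_
      · intro Y
        show (P 0 (X 0) (Y 0) * ∏ k : Fin 0, Gk S P Λ n X k (Y k.castSucc) (Y k.succ)) *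
            Ik S P Λ n X 0 (Y (Fin.last 0)) = P 0 (X 0) (Y default) * Ik S P Λ n X 0 (Y default)
        rw [Fin.prod_univ_zero, mul_one]
        rfl
      · show ∑ y : S 0, P 0 (X 0) y * Ik S P Λ n X 0 y = 1
        have hpt : ∀ y : S 0, P 0 (X 0) y * Ik S P Λ n X 0 y = P 0 (X 0) y := by
          intro y
          rw [Ik]
          by_cases h0 : 0 < n
          · rw [dif_pos h0]
            by_cases h1 : 0 < DDk S P Λ 0 (X ⟨1, Nat.succ_lt_succ h0⟩) y
            · rw [if_pos h1, mul_one]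
            · rw [if_neg h1, mul_zero]
              have hz : P 0 (X 0) y = 0 :=
                Pzero S P Λ n hPpos hΛpos hint X hX 0 h0 y h1
              rw [hz]
          · rw [dif_neg h0, mul_one]
        rw [Finset.sum_congr rfl fun y _ => hpt y]
        exact hPsum 0 (Nat.zero_le n) (X 0)
    | succ m ih =>
      intro hm1
      have hm : m < n := hm1
      have ihm := ih (le_of_lt hm)
      rw [← Equiv.sum_comp ((Fin.snocEquiv fun k : Fin (m + 2) => S k) :
        (S (m + 1) × ∀ i : Fin (m + 1), S i) ≃ (∀ k : Fin (m + 2), S k))]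
      rw [Fintype.sum_prod_type_right]
      simp only [Fin.snocEquiv_apply]
      have hterm : ∀ (Y' : ∀ i : Fin (m + 1), S i) (b : S (m + 1)),
          (P 0 (X 0) (Fin.snoc (α := fun k : Fin (m + 2) => S k) Y' b 0) *
            ∏ k : Fin (m + 1),
              Gk S P Λ n X k
                (Fin.snoc (α := fun k : Fin (m + 2) => S k) Y' b k.castSucc)
                (Fin.snoc (α := fun k : Fin (m + 2) => S k) Y' b k.succ)) *
            Ik S P Λ n X (m + 1)
              (Fin.snoc (α := fun k : Fin (m + 2) => S k) Y' b (Fin.last (m + 1)))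
          = (P 0 (X 0) (Y' 0) *
              ∏ k : Fin m, Gk S P Λ n X (k.castSucc : Fin (m + 1))
                (Y' k.castSucc) (Y' k.succ)) *
            (Gk S P Λ n X m (Y' (Fin.last m)) b * Ik S P Λ n X (m + 1) b) := by
        intro Y' b
        have hY0 : Fin.snoc (α := fun k : Fin (m + 2) => S k) Y' b 0 = Y' 0 :=
          Fin.snoc_castSucc (α := fun k : Fin (m + 2) => S k) (x := b) (p := Y') (i := 0)
        have hlast : Fin.snoc (α := fun k : Fin (m + 2) => S k) Y' b
            (Fin.last (m + 1)) = b :=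
          Fin.snoc_last (α := fun k : Fin (m + 2) => S k) (x := b) (p := Y')
        have hprod : (∏ k : Fin (m + 1),
              Gk S P Λ n X k
                (Fin.snoc (α := fun k : Fin (m + 2) => S k) Y' b k.castSucc)
                (Fin.snoc (α := fun k : Fin (m + 2) => S k) Y' b k.succ))
            = (∏ k : Fin m, Gk S P Λ n X (k.castSucc : Fin (m + 1))
                (Y' k.castSucc) (Y' k.succ)) *
              Gk S P Λ n X m (Y' (Fin.last m)) b := by
          rw [Fin.prod_univ_castSucc]
          congr 1
          · apply Finset.prod_congr rfl
            intro k _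
            have h1 : Fin.snoc (α := fun k : Fin (m + 2) => S k) Y' b
                k.castSucc.castSucc = Y' k.castSucc :=
              Fin.snoc_castSucc (α := fun k : Fin (m + 2) => S k) (x := b) (p := Y')
                (i := k.castSucc)
            have h2 : Fin.snoc (α := fun k : Fin (m + 2) => S k) Y' b
                k.castSucc.succ = Y' k.succ :=
              Fin.snoc_castSucc (α := fun k : Fin (m + 2) => S k) (x := b) (p := Y')
                (i := k.succ)
            rw [h1, h2]
          · have h1 : Fin.snoc (α := fun k : Fin (m + 2) => S k) Y' b
                (Fin.last m).castSucc = Y' (Fin.last m) :=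
              Fin.snoc_castSucc (α := fun k : Fin (m + 2) => S k) (x := b) (p := Y')
                (i := Fin.last m)
            have h2 : Fin.snoc (α := fun k : Fin (m + 2) => S k) Y' b
                (Fin.last m).succ = b :=
              Fin.snoc_last (α := fun k : Fin (m + 2) => S k) (x := b) (p := Y')
            rw [h1, h2]
            rfl
        rw [hY0, hlast, hprod]
        ring
      have hinner : ∀ Y' : ∀ i : Fin (m + 1), S i,
          (∑ b : S (m + 1),
            (P 0 (X 0) (Fin.snoc (α := fun k : Fin (m + 2) => S k) Y' b 0) *
              ∏ k : Fin (m + 1),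
                Gk S P Λ n X k
                  (Fin.snoc (α := fun k : Fin (m + 2) => S k) Y' b k.castSucc)
                  (Fin.snoc (α := fun k : Fin (m + 2) => S k) Y' b k.succ)) *
              Ik S P Λ n X (m + 1)
                (Fin.snoc (α := fun k : Fin (m + 2) => S k) Y' b (Fin.last (m + 1))))
          = (P 0 (X 0) (Y' 0) *
              ∏ k : Fin m, Gk S P Λ n X (k.castSucc : Fin (m + 1))
                (Y' k.castSucc) (Y' k.succ)) *
            Ik S P Λ n X m (Y' (Fin.last m)) := by
        intro Y'
        rw [Finset.sum_congr rfl fun b _ => hterm Y' b, ← Finset.mul_sum,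
          sumG S P Λ n hPpos hΛpos hint X hX m hm (Y' (Fin.last m))]
      show (∑ Y' : ∀ i : Fin (m + 1), S i,
          ∑ b : S (m + 1),
            (P 0 (X 0) (Fin.snoc (α := fun k : Fin (m + 2) => S k) Y' b 0) *
              ∏ k : Fin (m + 1),
                Gk S P Λ n X k
                  (Fin.snoc (α := fun k : Fin (m + 2) => S k) Y' b k.castSucc)
                  (Fin.snoc (α := fun k : Fin (m + 2) => S k) Y' b k.succ)) *
              Ik S P Λ n X (m + 1)
                (Fin.snoc (α := fun k : Fin (m + 2) => S k) Y' b (Fin.last (m + 1)))) = 1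
      rw [Finset.sum_congr rfl fun Y' _ => hinner Y']
      exact ihm
  -- now conclude
  have hfin := main n le_rfl
  have hIk : ∀ b : S n, Ik S P Λ n X n b = 1 := by
    intro b; rw [Ik, dif_neg (lt_irrefl n)]
  have hseq : ∀ Y : Cfg S n, seqPL S P Λ n X Y =
      (P 0 (X 0) (Y 0) * ∏ k : Fin n, Gk S P Λ n X k (Y k.castSucc) (Y k.succ)) := by
    intro Y
    by_cases hall : ∀ k : Fin n, 0 < DDk S P Λ k (X k.succ) (Y k.castSucc)
    · rw [seqPL, if_pos hall]
      congr 1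
      apply Finset.prod_congr rfl
      intro k _
      rw [Gk_fin, if_pos (hall k)]
    · rw [seqPL, if_neg hall]
      obtain ⟨j, hj⟩ := not_forall.mp hall
      symm
      apply mul_eq_zero_of_right
      apply Finset.prod_eq_zero (Finset.mem_univ j)
      rw [Gk_fin, if_neg hj]
  calc ∑ Y : Cfg S n, seqPL S P Λ n X Y
      = ∑ Y : Cfg S n, (P 0 (X 0) (Y 0) *
          ∏ k : Fin n, Gk S P Λ n X k (Y k.castSucc) (Y k.succ)) *
          Ik S P Λ n X n (Y (Fin.last n)) := by
        apply Finset.sum_congr rfl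
        intro Y _
        rw [hIk, mul_one, hseq]
    _ = 1 := hfin
end

section
/- (Macchi's theorem, finite algebraic form.) Let 𝔛 be a finite set and L an 𝔛 × 𝔛 matrix over ℝ (or ℂ) such that the matrix I + L is invertible, and set K = L(I + L)^{−1}. Then for every subset S ⊆ 𝔛: ∑_{X : S ⊆ X ⊆ 𝔛} det(L_X) = det(I + L) · det(K_S), where L_X denotes the submatrix of L with rows and columns indexed by X and K_S the submatrix of K indexed by S. In particular (taking S = ∅, using det(I+L) = ∑_X det L_X), if moreover det(L_X) ≥ 0 for all X, the L-ensemble P(X) = det(L_X)/det(I + L) is a determinantal point process with correlation kernel K = L(I+L)^{−1}. -/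
open Classical

/-- The determinant of the matrix whose rows on `S` come from `M` and whose rows off `S`
are standard basis vectors equals the determinant of the principal submatrix `M_S`. -/
lemma det_rowmix {α : Type} [Fintype α] [DecidableEq α] (M : Matrix α α ℝ) (S : Finset α) :
    (Matrix.of fun i j => if i ∈ S then M i j else if i = j then (1:ℝ) else 0).det
      = (M.submatrix (fun i : S => (i : α)) (fun j : S => (j : α))).det := by
  classical
  let e : {a // a ∈ S} ⊕ {a // ¬ a ∈ S} ≃ α := Equiv.sumCompl _
  rw [← Matrix.det_submatrix_equiv_self e]
  have h : (Matrix.of fun i j => if i ∈ S then M i j else if i = j then (1:ℝ) else 0).submatrix e e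
      = Matrix.fromBlocks (M.submatrix (fun i : S => (i : α)) (fun j : S => (j : α)))
          (Matrix.of fun (i : {a // a ∈ S}) (j : {a // ¬ a ∈ S}) => M i j) 0 1 := by
    ext i j
    have hne : ∀ (i : {a // ¬ a ∈ S}) (j : {a // a ∈ S}), ¬ ((i:α) = (j:α)) :=
      fun i j h => i.prop (h ▸ j.prop)
    rcases i with i | i <;> rcases j with j | j <;>
      simp [Matrix.fromBlocks, Matrix.one_apply, e, i.prop, j.prop, Subtype.ext_iff, hne]
  rw [h, Matrix.det_fromBlocks_zero₂₁, Matrix.det_one, mul_one]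

/-- Multilinear expansion of a determinant over the rows in `T`:
rows in `E` are forced to be basis vectors, rows in `T` are `L i + e i` and get expanded. -/
lemma det_expand {α : Type} [Fintype α] [DecidableEq α] (L : Matrix α α ℝ) :
    ∀ (T E : Finset α), Disjoint E T →
    (Matrix.of fun i j => if i ∈ E then (if i = j then (1:ℝ) else 0)
        else L i j + if i ∈ T ∧ i = j then 1 else 0).det
      = ∑ Y ∈ T.powerset, (Matrix.of fun i j =>
          if i ∈ E ∪ Y then (if i = j then (1:ℝ) else 0) else L i j).det := by
  classical
  intro T
  induction T using Finset.induction_on with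
  | empty =>
      intro E _
      simp
  | @insert a T ha ih =>
      intro E hdisj
      have haE : a ∉ E := fun h => (Finset.disjoint_left.mp hdisj h) (Finset.mem_insert_self a T)
      have hET : Disjoint E T := hdisj.mono_right (Finset.subset_insert a T)
      have haT : a ∉ T := ha
      set A : Matrix α α ℝ := Matrix.of fun i j => if i ∈ E then (if i = j then (1:ℝ) else 0)
        else L i j + if i ∈ T ∧ i = j then 1 else 0 with hA
      have hsplit : (Matrix.of fun i j => if i ∈ E then (if i = j then (1:ℝ) else 0)
          else L i j + if i ∈ insert a T ∧ i = j then 1 else 0)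
          = A.updateRow a ((fun j => L a j) + fun j => if a = j then (1:ℝ) else 0) := by
        ext i j
        by_cases hia : i = a
        · subst hia
          simp [A, haE, haT, Matrix.updateRow_self]
        · rw [Matrix.updateRow_ne hia]
          simp only [hA, Matrix.of_apply]
          by_cases hiE : i ∈ E
          · simp [hiE]
          · simp only [hiE, if_false, Finset.mem_insert]
            congr 2
            simp [hia]
      rw [hsplit, Matrix.det_updateRow_add]
      have h1 : A.updateRow a (fun j => L a j) = A := by
        ext i j
        by_cases hia : i = a
        · subst hia; simp [A, haE, haT]
        · rw [Matrix.updateRow_ne hia]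
      have h2 : A.updateRow a (fun j => if a = j then (1:ℝ) else 0)
          = Matrix.of fun i j => if i ∈ insert a E then (if i = j then (1:ℝ) else 0)
            else L i j + if i ∈ T ∧ i = j then 1 else 0 := by
        ext i j
        by_cases hia : i = a
        · subst hia; simp
        · rw [Matrix.updateRow_ne hia]
          simp [A, Finset.mem_insert, hia]
      have haE' : Disjoint (insert a E) T := by
        rw [Finset.disjoint_left]
        intro x hx hxT
        rcases Finset.mem_insert.mp hx with h | h
        · exact haT (h ▸ hxT)
        · exact Finset.disjoint_left.mp hET h hxT
      rw [h1, h2, ih E hET, ih (insert a E) haE',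
        Finset.sum_powerset_insert ha]
      congr 1
      apply Finset.sum_congr rfl
      intro Y hY
      congr 2
      ext i j
      have : insert a E ∪ Y = E ∪ insert a Y := by
        rw [Finset.insert_union, Finset.union_insert]
      rw [this]

/-- Macchi's theorem (finite algebraic form): if `1 + L` is invertible and
`K = L (1 + L)⁻¹`, then for every `S ⊆ 𝔛`,
`∑_{S ⊆ X ⊆ 𝔛} det(L_X) = det(1 + L) · det(K_S)`. In particular the `L`-ensemble
`P(X) = det(L_X)/det(1+L)` is determinantal with correlation kernel `K`. -/
theorem macchi_L_ensemble (α : Type) [Fintype α] [DecidableEq α]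
    (L : Matrix α α ℝ) (hL : IsUnit (1 + L)) (S : Finset α) :
    ∑ X ∈ Finset.univ.filter (fun X : Finset α => S ⊆ X),
        (L.submatrix (fun i : X => (i : α)) (fun j : X => (j : α))).det
      = (1 + L).det *
        ((L * (1 + L)⁻¹).submatrix (fun i : S => (i : α)) (fun j : S => (j : α))).det := by
  classical
  set B : Matrix α α ℝ := (1 + L)⁻¹ with hB
  have hdet : IsUnit (1 + L).det := (Matrix.isUnit_iff_isUnit_det _).mp hL
  have hBmul : B * (1 + L) = 1 := Matrix.nonsing_inv_mul _ hdet
  have hmulB : (1 + L) * B = 1 := Matrix.mul_nonsing_inv _ hdet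
  have hK : L * B = 1 - B := by
    have h' : B + L * B = 1 := by rw [← hmulB, add_mul, one_mul]
    exact eq_sub_of_add_eq' h'
  -- Step 1: LHS equals the determinant of `L + D_{Sᶜ}` written as a row-expansion matrix
  have step1 : ∑ X ∈ Finset.univ.filter (fun X : Finset α => S ⊆ X),
        (L.submatrix (fun i : X => (i : α)) (fun j : X => (j : α))).det
      = (Matrix.of fun i j => if i ∈ (∅ : Finset α) then (if i = j then (1:ℝ) else 0)
          else L i j + if i ∈ Sᶜ ∧ i = j then 1 else 0).det := by
    rw [det_expand L Sᶜ ∅ (by simp)]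
    refine Finset.sum_nbij' (i := fun X : Finset α => Xᶜ) (j := fun Y : Finset α => Yᶜ)
      ?_ ?_ ?_ ?_ ?_
    · intro X hX
      rw [Finset.mem_filter] at hX
      rw [Finset.mem_powerset]
      exact Finset.compl_subset_compl.mpr hX.2
    · intro Y hY
      rw [Finset.mem_powerset] at hY
      rw [Finset.mem_filter]
      exact ⟨Finset.mem_univ _, by simpa using Finset.compl_subset_compl.mpr hY⟩
    · intro X _; exact compl_compl X
    · intro Y _; exact compl_compl Y
    · intro X hX
      rw [← det_rowmix L X]
      congr 1
      ext i j
      by_cases h : i ∈ X <;> simp [h]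
  -- Step 2: algebraic identification of that matrix
  set DS : Matrix α α ℝ := Matrix.of fun i j => if i ∈ S ∧ i = j then (1:ℝ) else 0 with hDS
  have hmat : (Matrix.of fun i j => if i ∈ (∅ : Finset α) then (if i = j then (1:ℝ) else 0)
          else L i j + if i ∈ Sᶜ ∧ i = j then 1 else 0)
        = (1 - DS * B) * (1 + L) := by
    have hfactor : (1 - DS * B) * (1 + L) = (1 + L) - DS := by
      rw [sub_mul, one_mul, mul_assoc, hBmul, mul_one]
    rw [hfactor]
    ext i j
    by_cases hij : i = j
    · subst hij
      by_cases h : i ∈ S <;>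
          simp [DS, h, Matrix.one_apply, Matrix.sub_apply, Matrix.add_apply, Finset.mem_compl] <;>
        ring
    · simp [DS, hij, Matrix.one_apply, Matrix.sub_apply, Matrix.add_apply, Finset.mem_compl]
  -- Step 3: `1 - DS * B` is the row-mix of `K = L * B` on `S`
  have hKmix : (1 : Matrix α α ℝ) - DS * B
      = Matrix.of fun i j => if i ∈ S then (L * B) i j else if i = j then (1:ℝ) else 0 := by
    ext i j
    have hDSB : (DS * B) i j = if i ∈ S then B i j else 0 := by
      by_cases h : i ∈ S <;>
        simp [Matrix.mul_apply, DS, h]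
    rw [Matrix.sub_apply, hDSB, hK]
    by_cases h : i ∈ S <;> simp [h, Matrix.one_apply, Matrix.sub_apply]
  rw [step1, hmat, Matrix.det_mul, hKmix, det_rowmix, mul_comm]
end

section
/- (Borodin–Rains theorem on conditional L-ensembles, finite algebraic form.) Let 𝔛 be a finite set, 𝔜 ⊆ 𝔛 a nonempty subset, and L an 𝔛 × 𝔛 matrix over ℝ (or ℂ). Let 1_𝔜 be the diagonal 𝔛 × 𝔛 matrix with entry 1 at x ∈ 𝔜 and 0 at x ∈ 𝔜^c = 𝔛 \ 𝔜, and assume 1_𝔜 + L is invertible. Set K = (1_𝔜 − (1_𝔜 + L)^{−1}) restricted to 𝔜 × 𝔜. Then for every subset S ⊆ 𝔜: ∑_{Y : S ⊆ Y ⊆ 𝔜} det(L_{Y ∪ 𝔜^c}) = det(1_𝔜 + L) · det(K_S). In particular, if all det(L_{Y ∪ 𝔜^c}) ≥ 0, the conditional L-ensemble P(Y) = det(L_{Y∪𝔜^c})/det(1_𝔜 + L) on subsets Y of 𝔜 is a determinantal point process with correlation kernel K. -/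
open Classical

theorem detJ {α : Type} [Fintype α] [DecidableEq α] (Z : Finset α) (M : Matrix α α ℝ)
    (h : ∀ x y, y ∉ Z → M x y = if x = y then 1 else 0) :
    M.det = (M.submatrix (fun i : Z => (i : α)) (fun j : Z => (j : α))).det := by
  classical
  let e : {x // x ∈ Z} ⊕ {x // x ∉ Z} ≃ α := Equiv.sumCompl (· ∈ Z)
  have h1 : (M.submatrix e e) =
      Matrix.fromBlocks (M.submatrix (fun i : Z => (i : α)) (fun j : Z => (j : α)))
        0 (M.submatrix (fun i : {x // x ∉ Z} => (i : α)) (fun j : Z => (j : α))) 1 := by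
    ext i j
    cases i with
    | inl i => cases j with
      | inl j => rfl
      | inr j =>
        show M (↑i) (↑j) = 0
        rw [h _ _ j.2]
        simp only [ite_eq_right_iff]
        intro hij
        exact absurd (hij ▸ i.2) j.2
    | inr i => cases j with
      | inl j => rfl
      | inr j =>
        show M (↑i) (↑j) = (1 : Matrix _ _ ℝ) i j
        rw [h _ _ j.2, Matrix.one_apply]
        simp [Subtype.ext_iff]
  rw [← Matrix.det_submatrix_equiv_self e M, h1, Matrix.det_fromBlocks_zero₁₂]
  simp

noncomputable def auxM {α : Type} [Fintype α] [DecidableEq α] (L : Matrix α α ℝ)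
    (T W : Finset α) : Matrix α α ℝ :=
  Matrix.of fun x y => if y ∈ W then (if x = y then (1:ℝ) else 0)
    else (if y ∈ T then (if x = y then (1:ℝ) else 0) else 0) + L x y

theorem detG {α : Type} [Fintype α] [DecidableEq α] (L : Matrix α α ℝ)
    (T : Finset α) : ∀ (W : Finset α), Disjoint T W →
    (auxM L T W).det
      = ∑ V ∈ Finset.univ.filter (fun V : Finset α => (T ∪ W)ᶜ ⊆ V ∧ V ⊆ Wᶜ),
          (L.submatrix (fun i : V => (i : α)) (fun j : V => (j : α))).det := by
  classical
  induction T using Finset.induction_on with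
  | empty =>
    intro W _
    have hfil : Finset.univ.filter (fun V : Finset α => (∅ ∪ W)ᶜ ⊆ V ∧ V ⊆ Wᶜ) = {Wᶜ} := by
      ext V
      simp [Finset.Subset.antisymm_iff, eq_comm, and_comm]
    rw [hfil, Finset.sum_singleton]
    rw [detJ Wᶜ _ (by
      intro x y hy
      simp only [auxM, Matrix.of_apply, Finset.mem_compl, not_not] at hy ⊢
      simp [hy])]
    congr 1
    ext i j
    have hj2 : (j : α) ∉ W := by
      have h := j.2
      rw [Finset.mem_compl] at h
      exact h
    simp [auxM, hj2]
  | @insert x T' hx ih =>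
    intro W hd
    rw [Finset.disjoint_insert_left] at hd
    obtain ⟨hxW, hd'⟩ := hd
    have e1 : auxM L (insert x T') W = Matrix.updateCol (auxM L T' W) x
        ((fun i => if i = x then (1:ℝ) else 0) + (fun i => L i x)) := by
      ext i j
      by_cases hj : j = x
      · simp only [hj, Matrix.updateCol_apply, if_pos rfl]
        simp [auxM, hxW]
      · simp [auxM, Matrix.updateCol_apply, hj, Finset.mem_insert]
    have e2 : Matrix.updateCol (auxM L T' W) x (fun i => L i x) = auxM L T' W := by
      ext i j
      by_cases hj : j = x
      · simp only [hj, Matrix.updateCol_apply, if_pos rfl]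
        simp [auxM, hxW, hx]
      · simp [Matrix.updateCol_apply, hj]
    have e3 : Matrix.updateCol (auxM L T' W) x (fun i => if i = x then (1:ℝ) else 0)
        = auxM L T' (insert x W) := by
      ext i j
      by_cases hj : j = x
      · simp only [hj, Matrix.updateCol_apply, if_pos rfl]
        simp [auxM]
      · simp [auxM, Matrix.updateCol_apply, hj, Finset.mem_insert]
    rw [e1, Matrix.det_updateCol_add, e2, e3, ih W hd',
      ih (insert x W) (Finset.disjoint_insert_right.mpr ⟨hx, hd'⟩)]
    have hxC : x ∈ (T' ∪ W)ᶜ := by simp [hx, hxW]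
    have h1 : insert x T' ∪ W = insert x (T' ∪ W) := Finset.insert_union x T' W
    have h2 : T' ∪ insert x W = insert x (T' ∪ W) := Finset.union_insert x T' W
    simp only [h1, h2, Finset.compl_insert]
    rw [← Finset.sum_filter_add_sum_filter_not
      (Finset.univ.filter (fun V : Finset α => (T' ∪ W)ᶜ.erase x ⊆ V ∧ V ⊆ Wᶜ))
      (fun V => x ∉ V)
      (fun V : Finset α => (L.submatrix (fun i : V => (i : α)) (fun j : V => (j : α))).det),
      Finset.filter_filter, Finset.filter_filter]
    congr 1
    · congr 1
      ext V
      simp only [Finset.mem_filter, Finset.mem_univ, true_and, Finset.subset_erase]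
      tauto
    · congr 1
      ext V
      simp only [Finset.mem_filter, Finset.mem_univ, true_and, not_not]
      have hsub : (T' ∪ W)ᶜ ⊆ V ↔ x ∈ V ∧ (T' ∪ W)ᶜ.erase x ⊆ V := by
        rw [← Finset.insert_erase hxC, Finset.insert_subset_iff]
        simp [Finset.erase_insert_eq_erase]
      rw [hsub]
      tauto

/-- Borodin–Rains theorem on conditional `L`-ensembles (finite algebraic form): with `𝔜 ⊆ 𝔛`
nonempty, `1_𝔜` the diagonal indicator matrix of `𝔜`, `1_𝔜 + L` invertible and
`K = (1_𝔜 - (1_𝔜 + L)⁻¹)|_{𝔜×𝔜}`, for every `S ⊆ 𝔜`: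
`∑_{S ⊆ Y ⊆ 𝔜} det(L_{Y ∪ 𝔜ᶜ}) = det(1_𝔜 + L) · det(K_S)`. In particular the conditional
`L`-ensemble `P(Y) = det(L_{Y∪𝔜ᶜ})/det(1_𝔜 + L)` is determinantal with kernel `K`. -/
theorem borodin_rains_conditional_L_ensemble (α : Type) [Fintype α] [DecidableEq α]
    (𝔜 : Finset α) (h𝔜 : 𝔜.Nonempty) (L : Matrix α α ℝ)
    (hinv : IsUnit (Matrix.diagonal (fun x => if x ∈ 𝔜 then (1 : ℝ) else 0) + L))
    (S : Finset α) (hS : S ⊆ 𝔜) :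
    ∑ Y ∈ Finset.univ.filter (fun Y : Finset α => S ⊆ Y ∧ Y ⊆ 𝔜),
        (L.submatrix (fun i : (Y ∪ (Finset.univ \ 𝔜) : Finset α) => (i : α))
          (fun j : (Y ∪ (Finset.univ \ 𝔜) : Finset α) => (j : α))).det
      = (Matrix.diagonal (fun x => if x ∈ 𝔜 then (1 : ℝ) else 0) + L).det *
        ((Matrix.diagonal (fun x => if x ∈ 𝔜 then (1 : ℝ) else 0)
            - (Matrix.diagonal (fun x => if x ∈ 𝔜 then (1 : ℝ) else 0) + L)⁻¹).submatrix
          (fun i : S => (i : α)) (fun j : S => (j : α))).det := by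
  classical
  have hG := detG L (𝔜 \ S) ∅ (Finset.disjoint_empty_right _)
  have hLHS : ∑ Y ∈ Finset.univ.filter (fun Y : Finset α => S ⊆ Y ∧ Y ⊆ 𝔜),
        (L.submatrix (fun i : (Y ∪ (Finset.univ \ 𝔜) : Finset α) => (i : α))
          (fun j : (Y ∪ (Finset.univ \ 𝔜) : Finset α) => (j : α))).det
      = (auxM L (𝔜 \ S) ∅).det := by
    rw [hG]
    have hclean : Finset.univ.filter (fun V : Finset α => (𝔜 \ S ∪ ∅)ᶜ ⊆ V ∧ V ⊆ (∅:Finset α)ᶜ)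
        = Finset.univ.filter (fun V : Finset α => (𝔜 \ S)ᶜ ⊆ V) := by
      ext V
      simp [Finset.union_empty]
    rw [hclean]
    refine Finset.sum_nbij' (fun Y => Y ∪ (Finset.univ \ 𝔜)) (fun V => V ∩ 𝔜)
      ?_ ?_ ?_ ?_ ?_
    · intro Y hY
      simp only [Finset.mem_filter, Finset.mem_univ, true_and] at hY ⊢
      intro a ha
      rw [Finset.mem_compl, Finset.mem_sdiff] at ha
      push_neg at ha
      rw [Finset.mem_union, Finset.mem_sdiff]
      by_cases h1 : a ∈ 𝔜
      · exact Or.inl (hY.1 (ha h1))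
      · exact Or.inr ⟨Finset.mem_univ a, h1⟩
    · intro V hV
      simp only [Finset.mem_filter, Finset.mem_univ, true_and] at hV ⊢
      constructor
      · intro a ha
        rw [Finset.mem_inter]
        refine ⟨hV ?_, hS ha⟩
        rw [Finset.mem_compl, Finset.mem_sdiff]
        push_neg
        intro _
        exact ha
      · exact Finset.inter_subset_right
    · intro Y hY
      simp only [Finset.mem_filter, Finset.mem_univ, true_and] at hY
      show (Y ∪ Finset.univ \ 𝔜) ∩ 𝔜 = Y
      rw [Finset.union_inter_distrib_right]
      have h1 : Finset.univ \ 𝔜 ∩ 𝔜 = ∅ := by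
        ext a; simp [Finset.mem_sdiff]
      rw [h1, Finset.union_empty, Finset.inter_eq_left.mpr hY.2]
    · intro V hV
      simp only [Finset.mem_filter, Finset.mem_univ, true_and] at hV
      show (V ∩ 𝔜) ∪ Finset.univ \ 𝔜 = V
      have h2 : Finset.univ \ 𝔜 ⊆ V := by
        intro a ha
        refine hV ?_
        rw [Finset.mem_compl, Finset.mem_sdiff]
        rw [Finset.mem_sdiff] at ha
        push_neg
        intro h
        exact absurd h ha.2
      ext a
      simp only [Finset.mem_union, Finset.mem_inter, Finset.mem_sdiff, Finset.mem_univ,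
        true_and]
      constructor
      · rintro (⟨h, _⟩ | h)
        · exact h
        · exact h2 (by simp [h])
      · intro h
        by_cases h1 : a ∈ 𝔜
        · exact Or.inl ⟨h, h1⟩
        · exact Or.inr h1
    · intro Y _
      rfl
  rw [hLHS]
  have hB : auxM L (𝔜 \ S) ∅
      = (Matrix.diagonal (fun x => if x ∈ 𝔜 then (1 : ℝ) else 0) + L)
        - Matrix.diagonal (fun x => if x ∈ S then (1:ℝ) else 0) := by
    ext i j
    simp only [auxM, Matrix.of_apply, Finset.notMem_empty, if_false,
      Matrix.sub_apply, Matrix.add_apply, Matrix.diagonal_apply]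
    by_cases hij : i = j
    · subst hij
      by_cases h1 : i ∈ S
      · simp [h1, hS h1, Finset.mem_sdiff]
      · by_cases h2 : i ∈ 𝔜 <;> simp [h1, h2, Finset.mem_sdiff]
    · simp [hij, Ne.symm hij]
  have hDetU : IsUnit ((Matrix.diagonal (fun x => if x ∈ 𝔜 then (1 : ℝ) else 0) + L)).det :=
    ((Matrix.isUnit_iff_isUnit_det _).mp hinv)
  have hC : (Matrix.diagonal (fun x => if x ∈ 𝔜 then (1 : ℝ) else 0) + L)
        - Matrix.diagonal (fun x => if x ∈ S then (1:ℝ) else 0)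
      = (Matrix.diagonal (fun x => if x ∈ 𝔜 then (1 : ℝ) else 0) + L)
        * (1 - (Matrix.diagonal (fun x => if x ∈ 𝔜 then (1 : ℝ) else 0) + L)⁻¹
            * Matrix.diagonal (fun x => if x ∈ S then (1:ℝ) else 0)) := by
    rw [Matrix.mul_sub, Matrix.mul_one, ← Matrix.mul_assoc,
      Matrix.mul_nonsing_inv _ hDetU, Matrix.one_mul]
  rw [hB, hC, Matrix.det_mul]
  congr 1
  rw [detJ S _ (by
    intro x y hy
    simp only [Matrix.sub_apply, Matrix.mul_diagonal, Matrix.one_apply]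
    simp [hy])]
  congr 1
  ext i j
  have hjS : (j : α) ∈ S := j.2
  have hj𝔜 : (j : α) ∈ 𝔜 := hS hjS
  simp only [Matrix.submatrix_apply, Matrix.sub_apply, Matrix.mul_diagonal,
    Matrix.one_apply, Matrix.diagonal_apply, hjS, if_true, mul_one]
  by_cases hij : (i : α) = (j : α)
  · simp [hij, hj𝔜]
  · simp [hij]
end

section
/- Fix N ≥ 1 and define Ψ_i : ℤ → ℤ for 1 ≤ i ≤ N by Ψ_i(x) = (−1)^{x+i} · C(N−i, −x−i) when −N ≤ x ≤ −i (where C denotes the binomial coefficient) and Ψ_i(x) = 0 otherwise; equivalently Ψ_i(x) is the coefficient extraction (1/2πi)∮_{Γ_0} (1−z)^{N−i} z^{x+i−1} dz. Then for x^N ∈ W_N, the determinant det(Ψ_i(x_j^N))_{i,j=1}^N is nonzero if and only if x^N = (−N, −N+1, …, −1); in particular, the measure on W_N proportional to Δ_N(x^N) det(Ψ_i(x_j^N))_{i,j=1}^N is the Dirac delta measure at the packed configuration (−N, −N+1, …, −1). -/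
/-- The functions `Ψ_i(x) = (1/2πi) ∮ (1-z)^{N-i} z^{x+i-1} dz`, explicitly
`Ψ_i(x) = (-1)^{x+i} C(N-i, -x-i)` for `-N ≤ x ≤ -i` and `0` otherwise
(here written with the 0-based index `i : Fin N`, so `i` above is `i+1`). -/
def PsiStep (N : ℕ) (i : Fin N) (x : ℤ) : ℤ :=
  if -(N : ℤ) ≤ x ∧ x ≤ -(i : ℤ) - 1 then
    ((x + (i : ℤ) + 1).negOnePow : ℤ) * ((N - 1 - (i : ℕ)).choose (-x - (i : ℤ) - 1).toNat)
  else 0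

/-- For strictly increasing `x ∈ W_N`, the determinant `det(Ψ_i(x_j))` is nonzero if and only
if `x` is the packed configuration `(-N, -N+1, …, -1)`; hence the measure on `W_N`
proportional to `Δ_N(x) det(Ψ_i(x_j))` is the Dirac delta at the packed configuration. -/
theorem psi_det_packed (N : ℕ) (hN : 1 ≤ N) (x : Fin N → ℤ) (hx : StrictMono x) :
    (Matrix.of fun i j : Fin N => PsiStep N i (x j)).det ≠ 0
      ↔ (∀ j : Fin N, x j = (j : ℤ) - (N : ℤ)) := by
  constructor
  · intro hdet
    -- increments of a strictly monotone integer sequence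
    have step : ∀ (d : ℕ) (a b : Fin N), b.val = a.val + d → x a + d ≤ x b := by
      intro d
      induction d with
      | zero =>
          intro a b h
          have hab : a = b := Fin.ext (by omega)
          simp [hab]
      | succ d ih =>
          intro a b h
          have hb' : a.val + d < N := by omega
          have h1 := ih a ⟨a.val + d, hb'⟩ rfl
          have h2 : x ⟨a.val + d, hb'⟩ < x b := hx (by simp [Fin.lt_def, h])
          push_cast
          omega
    have h0N : 0 < N := hN
    have hN1 : N - 1 < N := by omega
    set a0 : Fin N := ⟨0, h0N⟩ with ha0
    set aL : Fin N := ⟨N - 1, hN1⟩ with haL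
    have h0 : -(N : ℤ) ≤ x a0 := by
      by_contra h
      apply hdet
      apply Matrix.det_eq_zero_of_column_eq_zero a0
      intro i
      show PsiStep N i (x a0) = 0
      rw [PsiStep, if_neg]
      rintro ⟨h1, h2⟩
      omega
    have hL : x aL ≤ -1 := by
      by_contra h
      apply hdet
      apply Matrix.det_eq_zero_of_column_eq_zero aL
      intro i
      show PsiStep N i (x aL) = 0
      rw [PsiStep, if_neg]
      rintro ⟨h1, h2⟩
      have : (0 : ℤ) ≤ (i : ℕ) := Int.natCast_nonneg _
      omega
    intro j
    have hjL : j.val < N := j.isLt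
    have hlow := step j.val a0 j (by simp [ha0])
    have hhigh := step (N - 1 - j.val) j aL (by simp [haL]; omega)
    have hc : ((N - 1 - j.val : ℕ) : ℤ) = (N : ℤ) - 1 - j.val := by omega
    rw [hc] at hhigh
    omega
  · intro hp
    have hM : (Matrix.of fun i j : Fin N => PsiStep N i (x j))
        = Matrix.of fun i j : Fin N => PsiStep N i ((j : ℤ) - N) := by
      ext i j
      simp [hp j]
    rw [hM]
    set M : Matrix (Fin N) (Fin N) ℤ :=
      Matrix.of fun i j : Fin N => PsiStep N i ((j : ℤ) - N) with hMdef
    have hdiag : ∀ i : Fin N, (M.submatrix id Fin.revPerm) i i = 1 := by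
      intro i
      have hi : i.val < N := i.isLt
      have hrev : ((Fin.rev i : Fin N) : ℤ) = (N : ℤ) - 1 - i.val := by
        simp [Fin.rev]
        omega
      show PsiStep N i (((Fin.rev i : Fin N) : ℤ) - N) = 1
      rw [hrev, PsiStep, if_pos (by constructor <;> omega)]
      have h1 : ((N : ℤ) - 1 - i.val - N + i + 1) = 0 := by ring
      have h2 : (-((N : ℤ) - 1 - i.val - N) - i - 1) = 0 := by ring
      rw [h1, h2]
      simp
    have htri : (M.submatrix id Fin.revPerm).BlockTriangular id := by
      intro i j hji
      have hji' : j.val < i.val := hji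
      show PsiStep N i (((Fin.rev j : Fin N) : ℤ) - N) = 0
      have hrev : ((Fin.rev j : Fin N) : ℤ) = (N : ℤ) - 1 - j.val := by
        simp [Fin.rev]
        omega
      rw [hrev, PsiStep, if_neg]
      rintro ⟨h1, h2⟩
      omega
    have hdet' : (M.submatrix id Fin.revPerm).det = 1 := by
      rw [Matrix.det_of_upperTriangular htri]
      exact Finset.prod_eq_one fun i _ => hdiag i
    have hperm := Matrix.det_permute' Fin.revPerm M
    rw [hdet'] at hperm
    intro h
    rw [h, mul_zero] at hperm
    exact one_ne_zero hperm
end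

section
/- (Toeplitz-like summation identity; Proposition A.1 for Laurent polynomials.) Let n ≥ 1, let α_1,…,α_n be nonzero real (or complex) numbers, and let f : ℤ → ℂ be finitely supported with generating Laurent polynomial F(z) = ∑_{m∈ℤ} f(m) z^m. Then for every x ∈ W_n: ∑_{y ∈ W_n} det(α_i^{y_j})_{i,j=1}^n · det(f(x_i − y_j))_{i,j=1}^n = F(α_1^{−1}) ⋯ F(α_n^{−1}) · det(α_i^{x_j})_{i,j=1}^n, where the sum over y ∈ W_n is finite (only finitely many y give a nonzero determinant, since f is finitely supported). -/
/-- The generating Laurent polynomial `F(w) = ∑_m f(m) w^m` of a finitely supported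
`f : ℤ →₀ ℂ`. -/
noncomputable def laurentGen (f : ℤ →₀ ℂ) (w : ℂ) : ℂ :=
  ∑ m ∈ f.support, f m * w ^ m

open Finset in
/-- Step C: multilinear expansion of the RHS. -/
lemma stepC (n : ℕ) (α : Fin n → ℂ) (hα : ∀ i, α i ≠ 0) (f : ℤ →₀ ℂ) (x : Fin n → ℤ)
    (S : Finset ℤ) (hS : ∀ {i : Fin n} {k : ℤ}, f (x i - k) ≠ 0 → k ∈ S) :
    ∑ y ∈ Fintype.piFinset (fun _ : Fin n => S),
        (Matrix.of fun i j : Fin n => α i ^ y j).det * ∏ j, f (x j - y j)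
      = (∏ i : Fin n, laurentGen f (α i)⁻¹) *
          (Matrix.of fun i j : Fin n => α i ^ x j).det := by
  classical
  have hrow : ∀ j : Fin n,
      (∑ k ∈ S, f (x j - k) • (fun i : Fin n => α i ^ k))
        = fun i : Fin n => laurentGen f (α i)⁻¹ * α i ^ x j := by
    intro j
    funext i
    simp only [Finset.sum_apply, Pi.smul_apply, smul_eq_mul]
    have hsub : f.support.image (fun m => x j - m) ⊆ S := by
      intro k hk
      obtain ⟨m, hm, rfl⟩ := Finset.mem_image.1 hk
      refine hS (i := j) ?_
      simpa using Finsupp.mem_support_iff.1 hm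
    rw [← Finset.sum_subset hsub]
    · rw [Finset.sum_image (by intro a _ b _ h; have h' : x j - a = x j - b := h; omega)]
      rw [laurentGen, Finset.sum_mul]
      refine Finset.sum_congr rfl fun m hm => ?_
      have : x j - (x j - m) = m := by ring
      rw [this, zpow_sub₀ (hα i), inv_zpow]
      field_simp
    · intro k hkS hk
      have : f (x j - k) = 0 := by
        by_contra h
        exact hk (Finset.mem_image.2 ⟨x j - k, Finsupp.mem_support_iff.2 h, by ring⟩)
      simp [this]
  have key := (Matrix.detRowAlternating (R := ℂ) (n := Fin n)).toMultilinearMap.map_sum_finset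
    (g := fun (j : Fin n) (k : ℤ) => f (x j - k) • (fun i : Fin n => α i ^ k))
    (A := fun _ => S)
  simp only [hrow] at key
  have trans1 : ∀ y : Fin n → ℤ,
      (Matrix.detRowAlternating (R := ℂ)).toMultilinearMap (fun j => f (x j - y j) • fun i : Fin n => α i ^ y j)
        = (∏ j, f (x j - y j)) * (Matrix.of fun i j : Fin n => α i ^ y j).det := by
    intro y
    rw [(Matrix.detRowAlternating (R := ℂ)).toMultilinearMap.map_smul_univ (fun j => f (x j - y j))
      (fun j i => α i ^ y j)]
    rw [smul_eq_mul]
    congr 1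
    exact Matrix.det_transpose (Matrix.of fun i j : Fin n => α i ^ y j)
  have trans2 : (Matrix.detRowAlternating (R := ℂ)).toMultilinearMap
      (fun j => fun i : Fin n => laurentGen f (α i)⁻¹ * α i ^ x j)
        = (∏ i : Fin n, laurentGen f (α i)⁻¹) *
          (Matrix.of fun i j : Fin n => α i ^ x j).det := by
    have := Matrix.det_mul_column (fun i => laurentGen f (α i)⁻¹)
      (Matrix.of fun i j : Fin n => α i ^ x j)
    rw [← this]
    have : (Matrix.detRowAlternating (R := ℂ)).toMultilinearMap
        (fun j => fun i : Fin n => laurentGen f (α i)⁻¹ * α i ^ x j)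
        = (Matrix.of fun j i : Fin n => laurentGen f (α i)⁻¹ * α i ^ x j).det := rfl
    rw [this, ← Matrix.det_transpose]
    rfl
  rw [trans2] at key
  rw [key]
  refine Finset.sum_congr rfl fun y hy => ?_
  rw [trans1 y, mul_comm]


open Finset in
lemma stepB (n : ℕ) (α : Fin n → ℂ) (f : ℤ →₀ ℂ) (x : Fin n → ℤ) (S : Finset ℤ) :
    ∑ y ∈ (Fintype.piFinset (fun _ : Fin n => S)).filter (fun y => StrictMono y),
        (Matrix.of fun i j : Fin n => α i ^ y j).det *
          (Matrix.of fun i j : Fin n => f (x i - y j)).det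
      = ∑ y ∈ Fintype.piFinset (fun _ : Fin n => S),
        (Matrix.of fun i j : Fin n => α i ^ y j).det * ∏ j, f (x j - y j) := by
  classical
  set P := Fintype.piFinset (fun _ : Fin n => S) with hP
  -- kill the non-injective terms on the RHS
  rw [← Finset.sum_filter_add_sum_filter_not P (fun y => Function.Injective y)]
  have hnon : ∑ y ∈ P.filter (fun y => ¬ Function.Injective y),
      (Matrix.of fun i j : Fin n => α i ^ y j).det * ∏ j, f (x j - y j) = 0 := by
    refine Finset.sum_eq_zero fun y hy => ?_
    obtain ⟨-, hinj⟩ := Finset.mem_filter.1 hy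
    simp only [Function.Injective, not_forall] at hinj
    obtain ⟨j₁, j₂, hval, hne⟩ := hinj
    rw [Matrix.det_zero_of_column_eq hne (fun i => by simp [hval]), zero_mul]
  rw [hnon, add_zero]
  -- bijection with pairs (z, σ)
  have hbij : ∑ y ∈ P.filter (fun y => Function.Injective y),
      ((Matrix.of fun i j : Fin n => α i ^ y j).det * ∏ j, f (x j - y j))
      = ∑ p ∈ (P.filter fun y => StrictMono y) ×ˢ (Finset.univ : Finset (Equiv.Perm (Fin n))),
        (Matrix.of fun i j : Fin n => α i ^ (p.1 ∘ p.2) j).det *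
          ∏ j, f (x j - (p.1 ∘ p.2) j) := by
    refine (Finset.sum_bij (fun p _ => p.1 ∘ p.2) ?_ ?_ ?_ ?_).symm
    · rintro ⟨z, σ⟩ hp
      obtain ⟨hz, -⟩ := Finset.mem_product.1 hp
      obtain ⟨hzP, hzm⟩ := Finset.mem_filter.1 hz
      refine Finset.mem_filter.2 ⟨?_, hzm.injective.comp σ.injective⟩
      exact Fintype.mem_piFinset.2 fun j => Fintype.mem_piFinset.1 hzP (σ j)
    · rintro ⟨z₁, σ₁⟩ h₁ ⟨z₂, σ₂⟩ h₂ heq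
      obtain ⟨hz₁, -⟩ := Finset.mem_product.1 h₁
      obtain ⟨hz₂, -⟩ := Finset.mem_product.1 h₂
      have hm₁ := (Finset.mem_filter.1 hz₁).2
      have hm₂ := (Finset.mem_filter.1 hz₂).2
      have heq' : z₁ ∘ ⇑σ₁ = z₂ ∘ ⇑σ₂ := heq
      have hrange : Set.range z₁ = Set.range z₂ := by
        rw [← σ₁.surjective.range_comp z₁, ← σ₂.surjective.range_comp z₂, heq']
      haveI : WellFoundedLT (Fin n) := Finite.to_wellFoundedLT
      have hz : z₁ = z₂ := (StrictMono.range_inj hm₁ hm₂).1 hrange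
      subst hz
      have hσ : σ₁ = σ₂ := by
        ext j
        exact congrArg Fin.val (hm₁.injective (congrFun heq' j))
      simp [hσ]
    · intro y hy
      obtain ⟨hyP, hyinj⟩ := Finset.mem_filter.1 hy
      set τ := Tuple.sort y with hτ
      refine ⟨(y ∘ τ, τ⁻¹), ?_, ?_⟩
      · refine Finset.mem_product.2 ⟨Finset.mem_filter.2 ⟨?_, ?_⟩, Finset.mem_univ _⟩
        · exact Fintype.mem_piFinset.2 fun j => Fintype.mem_piFinset.1 hyP (τ j)
        · exact (Tuple.monotone_sort y).strictMono_of_injective (hyinj.comp τ.injective)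
      · funext j
        simp [Function.comp, Equiv.Perm.inv_def]
    · intro p hp
      rfl
  rw [hbij, Finset.sum_product]
  refine Finset.sum_congr rfl fun z hz => ?_
  have hzm := (Finset.mem_filter.1 hz).2
  -- per-z permutation sum
  have key : ∀ σ : Equiv.Perm (Fin n),
      (Matrix.of fun i j : Fin n => α i ^ (z ∘ σ) j).det * ∏ j, f (x j - (z ∘ σ) j)
        = ((Equiv.Perm.sign σ : ℤ) : ℂ) * (Matrix.of fun i j : Fin n => α i ^ z j).det *
            ∏ j, f (x (σ⁻¹ j) - z j) := by
    intro σ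
    have h1 : (Matrix.of fun i j : Fin n => α i ^ (z ∘ σ) j)
        = (Matrix.of fun i j : Fin n => α i ^ z j).submatrix id σ := rfl
    rw [h1, Matrix.det_permute']
    have h2 : ∏ j, f (x j - (z ∘ σ) j) = ∏ j, f (x (σ⁻¹ j) - z j) := by
      rw [← Equiv.prod_comp σ (fun j => f (x (σ⁻¹ j) - z j))]
      simp [Function.comp]
    rw [h2]
  simp only [key]
  rw [← Equiv.sum_comp (Equiv.inv (Equiv.Perm (Fin n)))
    (fun σ => ((Equiv.Perm.sign σ : ℤ) : ℂ) * (Matrix.of fun i j : Fin n => α i ^ z j).det *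
      ∏ j, f (x (σ⁻¹ j) - z j))]
  simp only [Equiv.inv_apply, Equiv.Perm.sign_inv, inv_inv]
  rw [Matrix.det_apply (Matrix.of fun i j : Fin n => f (x i - z j)), Finset.mul_sum]
  refine Finset.sum_congr rfl fun σ _ => ?_
  simp only [Matrix.of_apply, Units.smul_def, zsmul_eq_mul]
  ring

open Finset in
/-- Toeplitz-like summation identity (Proposition A.1 for Laurent polynomials):
for nonzero `α_1, …, α_n` and finitely supported `f` with Laurent polynomial `F`,
`∑_{y ∈ W_n} det(α_i^{y_j}) det(f(x_i - y_j)) = F(α_1⁻¹) ⋯ F(α_n⁻¹) det(α_i^{x_j})`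
for every `x ∈ W_n`. -/
theorem toeplitz_like_sum (n : ℕ) (hn : 1 ≤ n) (α : Fin n → ℂ) (hα : ∀ i, α i ≠ 0)
    (f : ℤ →₀ ℂ) (x : Fin n → ℤ) (hx : StrictMono x) :
    ∑ᶠ y ∈ {y : Fin n → ℤ | StrictMono y},
        (Matrix.of fun i j : Fin n => α i ^ y j).det *
          (Matrix.of fun i j : Fin n => f (x i - y j)).det
      = (∏ i : Fin n, laurentGen f (α i)⁻¹) *
          (Matrix.of fun i j : Fin n => α i ^ x j).det := by
  classical
  set S : Finset ℤ := (Finset.univ ×ˢ f.support).image (fun p : Fin n × ℤ => x p.1 - p.2) with hSdef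
  have hS : ∀ {i : Fin n} {k : ℤ}, f (x i - k) ≠ 0 → k ∈ S := by
    intro i k hk
    refine Finset.mem_image.2 ⟨(i, x i - k), ?_, by ring⟩
    exact Finset.mem_product.2 ⟨Finset.mem_univ _, Finsupp.mem_support_iff.2 hk⟩
  have stepA : ∑ᶠ y ∈ {y : Fin n → ℤ | StrictMono y},
        (Matrix.of fun i j : Fin n => α i ^ y j).det *
          (Matrix.of fun i j : Fin n => f (x i - y j)).det
      = ∑ y ∈ (Fintype.piFinset (fun _ : Fin n => S)).filter (fun y => StrictMono y),
        (Matrix.of fun i j : Fin n => α i ^ y j).det *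
          (Matrix.of fun i j : Fin n => f (x i - y j)).det := by
    apply finsum_mem_eq_sum_of_inter_support_eq
    ext y
    simp only [Set.mem_inter_iff, Set.mem_setOf_eq, Function.mem_support, Finset.coe_filter,
      Fintype.mem_piFinset]
    constructor
    · rintro ⟨hmono, hne⟩
      refine ⟨⟨fun j => ?_, hmono⟩, hne⟩
      by_contra hj
      apply hne
      have hz : (Matrix.of fun i j : Fin n => f (x i - y j)).det = 0 := by
        refine Matrix.det_eq_zero_of_column_eq_zero j fun i => ?_
        by_contra hfi
        exact hj (hS hfi)
      rw [hz, mul_zero]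
    · rintro ⟨⟨-, hmono⟩, hne⟩
      exact ⟨hmono, hne⟩
  rw [stepA, stepB n α f x S, stepC n α hα f x S hS]
end

section
/- (Toeplitz-like summation identity with a virtual variable; Proposition A.2 for Laurent polynomials.) Let n ≥ 2, let α_1,…,α_n be nonzero real (or complex) numbers, and let f : ℤ → ℂ be finitely supported with generating Laurent polynomial F(z) = ∑_{m∈ℤ} f(m) z^m. For x ∈ W_n and y ∈ W_{n−1}, let M(x,y) be the n×n matrix with M_{i,j} = f(x_i − y_j) for 1 ≤ j ≤ n−1 and M_{i,n} = α_n^{x_i} (the virtual column, f(x − virt) := α_n^x). Then for every x ∈ W_n: ∑_{y ∈ W_{n−1}} det(α_i^{y_j})_{i,j=1}^{n−1} · det(M(x,y)) = F(α_1^{−1}) ⋯ F(α_{n−1}^{−1}) · det(α_i^{x_j})_{i,j=1}^n, the sum over y ∈ W_{n−1} being finite. -/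
open Finset

section Aux
variable {m : ℕ}

/-- The equivalence between `Fin m` and the subtype of `Fin (m+1)` of elements `< m`. -/
def castEquivLt (m : ℕ) : Fin m ≃ {j : Fin (m + 1) // (j : ℕ) < m} where
  toFun i := ⟨i.castSucc, by simpa using i.isLt⟩
  invFun j := ⟨(j : Fin (m+1)), j.2⟩
  left_inv i := by ext; simp
  right_inv j := by ext; simp

variable (α : Fin (m + 1) → ℂ) (f : ℤ →₀ ℂ) (x : Fin (m + 1) → ℤ)

/-- The matrix `M(x,y)`. -/
noncomputable def Mmat (y : Fin m → ℤ) : Matrix (Fin (m + 1)) (Fin (m + 1)) ℂ :=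
  Matrix.of fun i j =>
    if h : (j : ℕ) < m then f (x i - y ⟨j, h⟩) else α (Fin.last m) ^ x i

lemma Mmat_perm (y : Fin m → ℤ) (σ : Equiv.Perm (Fin m)) :
    Mmat α f x (y ∘ σ) = (Mmat α f x y).submatrix id (σ.extendDomain (castEquivLt m)) := by
  ext i j
  by_cases h : (j : ℕ) < m
  · have hj : j = ((castEquivLt m ⟨(j : ℕ), h⟩ : {j : Fin (m+1) // (j : ℕ) < m}) : Fin (m+1)) := by
      simp [castEquivLt]
    rw [hj]
    rw [Matrix.submatrix_apply, id_eq, Equiv.Perm.extendDomain_apply_image]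
    simp only [Mmat, castEquivLt, Matrix.of_apply, Equiv.coe_fn_mk, Fin.coe_castSucc]
    rw [dif_pos h, dif_pos ((σ ⟨(j:ℕ), h⟩).isLt)]
    simp [Function.comp]
  · rw [Matrix.submatrix_apply, id_eq,
      Equiv.Perm.extendDomain_apply_not_subtype _ _ (by simpa using h)]
    simp [Mmat, h]

lemma Mmat_det_perm (y : Fin m → ℤ) (σ : Equiv.Perm (Fin m)) :
    (Mmat α f x (y ∘ σ)).det = (Equiv.Perm.sign σ : ℂ) * (Mmat α f x y).det := by
  rw [Mmat_perm, Matrix.det_permute', Equiv.Perm.sign_extendDomain]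


lemma Mmat_det_eq_zero_of_not_injective (y : Fin m → ℤ) (hy : ¬ Function.Injective y) :
    (Mmat α f x y).det = 0 := by
  rw [Function.not_injective_iff] at hy
  obtain ⟨a, b, hab, hne⟩ := hy
  refine Matrix.det_zero_of_column_eq (i := a.castSucc) (j := b.castSucc)
    (by simpa [Fin.castSucc_inj] using hne) fun k => ?_
  simp only [Mmat, Matrix.of_apply]
  rw [dif_pos (by simpa using a.isLt), dif_pos (by simpa using b.isLt)]
  congr 1
  have ha : (⟨((a.castSucc : Fin (m+1)) : ℕ), by simpa using a.isLt⟩ : Fin m) = a := by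
    ext; simp
  have hb : (⟨((b.castSucc : Fin (m+1)) : ℕ), by simpa using b.isLt⟩ : Fin m) = b := by
    ext; simp
  rw [ha, hb, hab]

/-- The finite set containing all possible values `x i - s`, `s ∈ supp f`. -/
noncomputable def Tset : Finset ℤ :=
  Finset.image (fun p : Fin (m + 1) × ℤ => x p.1 - p.2) (Finset.univ ×ˢ f.support)

lemma Mmat_det_eq_zero_of_not_mem (y : Fin m → ℤ) (j : Fin m) (hj : y j ∉ Tset f x) :
    (Mmat α f x y).det = 0 := by
  refine Matrix.det_eq_zero_of_column_eq_zero j.castSucc fun i => ?_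
  simp only [Mmat, Matrix.of_apply]
  rw [dif_pos (by simpa using j.isLt)]
  have hjj : (⟨((j.castSucc : Fin (m+1)) : ℕ), by simpa using j.isLt⟩ : Fin m) = j := by
    ext; simp
  rw [hjj]
  by_contra hne
  exact hj (Finset.mem_image.2 ⟨(i, x i - y j), by
    simp [Finset.mem_product, Finsupp.mem_support_iff, hne]⟩)

lemma colsum (i : Fin (m + 1)) (β : ℂ) (hβ : β ≠ 0) :
    ∑ t ∈ Tset f x, β ^ t * f (x i - t) = laurentGen f β⁻¹ * β ^ x i := by
  have h1 : ∑ t ∈ Tset f x, β ^ t * f (x i - t)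
      = ∑ t ∈ (Tset f x).filter (fun t => x i - t ∈ f.support), β ^ t * f (x i - t) := by
    refine (Finset.sum_filter_of_ne fun t ht hne => ?_).symm
    rw [Finsupp.mem_support_iff]
    intro h0
    exact hne (by rw [h0, mul_zero])
  rw [h1, laurentGen, Finset.sum_mul]
  refine Finset.sum_nbij' (fun t => x i - t) (fun s => x i - s) ?_ ?_ ?_ ?_ ?_
  · intro t ht
    exact (Finset.mem_filter.1 ht).2
  · intro s hs
    refine Finset.mem_filter.2 ⟨Finset.mem_image.2 ⟨(i, s), by simp [Finset.mem_product, hs]⟩, by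
      simpa using hs⟩
  · intro t _; ring
  · intro s _; ring
  · intro t _
    have h2 : β ^ t = β⁻¹ ^ (x i - t) * β ^ x i := by
      rw [inv_zpow, ← zpow_neg, ← zpow_add₀ hβ]
      congr 1
      ring
    rw [h2]
    ring


lemma prod_ite_lt (c : Fin (m + 1) → ℂ) :
    (∏ j : Fin (m + 1), if (j : ℕ) < m then c j else 1)
      = ∏ j : Fin m, c j.castSucc := by
  rw [Fin.prod_univ_castSucc]
  have hlast : ¬ ((Fin.last m : Fin (m+1)) : ℕ) < m := by simp
  rw [if_neg hlast, mul_one]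
  refine Finset.prod_congr rfl fun j _ => ?_
  rw [if_pos (by simpa using j.isLt)]

/-- The determinant as a multilinear map in the rows. -/
noncomputable def Dmap (m : ℕ) :
    MultilinearMap ℂ (fun _ : Fin (m + 1) => (Fin (m + 1) → ℂ)) ℂ :=
  (Matrix.detRowAlternating :
    (Fin (m + 1) → ℂ) [⋀^Fin (m + 1)]→ₗ[ℂ] ℂ).toMultilinearMap

lemma Dmap_eq_det (v : Fin (m + 1) → (Fin (m + 1) → ℂ)) :
    Dmap m v = (Matrix.of v).det := rfl

lemma det_eq_Dmap_cols (M : Matrix (Fin (m + 1)) (Fin (m + 1)) ℂ) :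
    M.det = Dmap m (fun j i => M i j) := by
  rw [← Matrix.det_transpose M]
  rfl

lemma step_D (hα : ∀ i, α i ≠ 0) :
    ∑ y ∈ Fintype.piFinset (fun _ : Fin m => Tset f x),
        (∏ j : Fin m, α j.castSucc ^ y j) * (Mmat α f x y).det
      = (∏ i : Fin m, laurentGen f (α i.castSucc)⁻¹) *
          (Matrix.of fun i j : Fin (m + 1) => α i ^ x j).det := by
  classical
  set A : Fin (m + 1) → Finset ℤ := fun j => if (j : ℕ) < m then Tset f x else {0} with hA
  set g : ∀ _ : Fin (m + 1), ℤ → (Fin (m + 1) → ℂ) := fun j t =>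
    if h : (j : ℕ) < m then (fun i => α j ^ t * f (x i - t))
    else (fun i => α (Fin.last m) ^ x i) with hg
  have key := (Dmap m).map_sum_finset g A
  -- identify the left side of `key`
  have hL : (fun j => ∑ t ∈ A j, g j t)
      = fun j : Fin (m + 1) => (if (j : ℕ) < m then laurentGen f (α j)⁻¹ else 1) •
          (fun i => α j ^ x i) := by
    funext j
    by_cases h : (j : ℕ) < m
    · funext i
      simp only [hA, hg, if_pos h, dif_pos h, Finset.sum_apply, Pi.smul_apply, smul_eq_mul]
      rw [colsum f x i (α j) (hα j)]
    · have hj : j = Fin.last m :=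
        Fin.ext (le_antisymm (Nat.lt_succ_iff.mp j.isLt) (not_lt.mp h))
      funext i
      simp only [hA, hg, if_neg h, dif_neg h, Finset.sum_singleton, Pi.smul_apply, smul_eq_mul,
        one_mul]
      rw [hj]
  rw [hL, MultilinearMap.map_smul_univ, prod_ite_lt (fun j => laurentGen f (α j)⁻¹)] at key
  -- identify the right side of `key` with the desired sum
  rw [smul_eq_mul, Dmap_eq_det] at key
  rw [key]
  refine (Finset.sum_nbij' (i := fun r => fun j : Fin m => r j.castSucc)
    (j := fun y => fun j : Fin (m + 1) => if h : (j : ℕ) < m then y ⟨(j : ℕ), h⟩ else 0)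
    ?_ ?_ ?_ ?_ ?_).symm
  · intro r hr
    rw [Fintype.mem_piFinset] at hr ⊢
    intro j
    have := hr j.castSucc
    simp only [hA] at this
    rwa [if_pos (by simpa using j.isLt)] at this
  · intro y hy
    rw [Fintype.mem_piFinset] at hy ⊢
    intro j
    by_cases h : (j : ℕ) < m
    · rw [dif_pos h]
      simp only [hA, if_pos h]
      exact hy _
    · rw [dif_neg h]
      simp only [hA, if_neg h]
      simp
  · intro r hr
    dsimp only
    funext j
    by_cases h : (j : ℕ) < m
    · rw [dif_pos h]
      congr 1
    · rw [dif_neg h]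
      rw [Fintype.mem_piFinset] at hr
      have := hr j
      rw [hA] at this
      simp only [if_neg h, Finset.mem_singleton] at this
      exact this.symm
  · intro y hy
    dsimp only
    funext j
    rw [dif_pos (by simpa using j.isLt)]
    congr 1
  · intro r hr
    dsimp only
    have hp : (∏ j : Fin m, α j.castSucc ^ r j.castSucc)
        = ∏ j : Fin (m + 1), if (j : ℕ) < m then α j ^ r j else 1 :=
      (prod_ite_lt (fun j => α j ^ r j)).symm
    have hs := MultilinearMap.map_smul_univ (Dmap m)
        (fun j : Fin (m + 1) => if (j : ℕ) < m then α j ^ r j else 1)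
        (fun j i => Mmat α f x (fun k => r k.castSucc) i j)
    rw [det_eq_Dmap_cols (Mmat α f x (fun k => r k.castSucc)), hp, ← smul_eq_mul, ← hs]
    congr 1
    funext j
    by_cases h : (j : ℕ) < m
    · simp only [hg, dif_pos h]
      funext i
      simp only [Pi.smul_apply, smul_eq_mul, Mmat, Matrix.of_apply, dif_pos h, if_pos h]
      have hrj : (⟨((j : Fin (m+1)) : ℕ), h⟩ : Fin m).castSucc = j := by
        ext
        simp
      rw [hrj]
    · simp only [hg, dif_neg h]
      funext i
      simp only [Pi.smul_apply, smul_eq_mul, Mmat, Matrix.of_apply, dif_neg h, if_neg h, one_mul]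

lemma stepB_term (z : Fin m → ℤ) (σ : Equiv.Perm (Fin m)) :
    ((Equiv.Perm.sign σ : ℤ) : ℂ) * (∏ j, α ((σ j).castSucc) ^ z j) * (Mmat α f x z).det
      = (∏ j, α (j.castSucc) ^ (z ∘ ⇑σ⁻¹) j) * (Mmat α f x (z ∘ ⇑σ⁻¹)).det := by
  rw [Mmat_det_perm α f x z σ⁻¹]
  have hprod : ∏ j, α (j.castSucc) ^ (z ∘ ⇑σ⁻¹) j = ∏ j, α ((σ j).castSucc) ^ z j := by
    rw [← Equiv.prod_comp σ (fun j => α (j.castSucc) ^ (z ∘ ⇑σ⁻¹) j)]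
    refine Finset.prod_congr rfl fun j _ => ?_
    simp
  rw [hprod, Equiv.Perm.sign_inv]
  ring

open Finset in
lemma stepBC :
    ∑ y ∈ (Fintype.piFinset fun _ : Fin m => Tset f x).filter (fun y => StrictMono y),
        (Matrix.of fun i j : Fin m => α i.castSucc ^ y j).det * (Mmat α f x y).det
      = ∑ y ∈ Fintype.piFinset (fun _ : Fin m => Tset f x),
          (∏ j : Fin m, α j.castSucc ^ y j) * (Mmat α f x y).det := by
  classical
  have h1 : ∀ z : Fin m → ℤ,
      (Matrix.of fun i j : Fin m => α i.castSucc ^ z j).det * (Mmat α f x z).det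
        = ∑ σ : Equiv.Perm (Fin m),
            (∏ j : Fin m, α (j.castSucc) ^ (z ∘ ⇑σ⁻¹) j) * (Mmat α f x (z ∘ ⇑σ⁻¹)).det := by
    intro z
    rw [Matrix.det_apply', Finset.sum_mul]
    refine Finset.sum_congr rfl fun σ _ => ?_
    rw [← stepB_term α f x z σ]
    simp [mul_assoc]
  simp only [h1]
  rw [← Finset.sum_product']
  -- now a bijection between (incr z, σ) and injective y
  have h2 : ∑ y ∈ (Fintype.piFinset fun _ : Fin m => Tset f x).filter
        (fun y => Function.Injective y),
      (∏ j : Fin m, α j.castSucc ^ y j) * (Mmat α f x y).det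
      = ∑ y ∈ Fintype.piFinset (fun _ : Fin m => Tset f x),
          (∏ j : Fin m, α j.castSucc ^ y j) * (Mmat α f x y).det := by
    refine Finset.sum_subset (Finset.filter_subset _ _) fun y hy hny => ?_
    have hni : ¬ Function.Injective y := fun hinj => hny (Finset.mem_filter.2 ⟨hy, hinj⟩)
    rw [Mmat_det_eq_zero_of_not_injective α f x y hni, mul_zero]
  rw [← h2]
  refine Finset.sum_nbij' (i := fun p : (Fin m → ℤ) × Equiv.Perm (Fin m) => p.1 ∘ ⇑(p.2⁻¹))
    (j := fun y => (y ∘ ⇑(Tuple.sort y), Tuple.sort y)) ?_ ?_ ?_ ?_ ?_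
  · rintro ⟨z, σ⟩ hp
    rw [Finset.mem_product, Finset.mem_filter, Fintype.mem_piFinset] at hp
    obtain ⟨⟨hzT, hzmono⟩, -⟩ := hp
    refine Finset.mem_filter.2 ⟨Fintype.mem_piFinset.2 fun j => hzT _, ?_⟩
    exact hzmono.injective.comp (Equiv.injective _)
  · intro y hy
    rw [Finset.mem_filter, Fintype.mem_piFinset] at hy
    obtain ⟨hyT, hyinj⟩ := hy
    rw [Finset.mem_product, Finset.mem_filter, Fintype.mem_piFinset]
    refine ⟨⟨fun j => hyT _, ?_⟩, Finset.mem_univ _⟩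
    exact (Tuple.monotone_sort y).strictMono_of_injective
      (hyinj.comp (Equiv.injective _))
  · rintro ⟨z, σ⟩ hp
    rw [Finset.mem_product, Finset.mem_filter, Fintype.mem_piFinset] at hp
    obtain ⟨⟨hzT, hzmono⟩, -⟩ := hp
    dsimp only
    have hsort : Tuple.sort (z ∘ ⇑σ⁻¹) = σ := by
      symm
      rw [Tuple.eq_sort_iff]
      constructor
      · have : (z ∘ ⇑σ⁻¹) ∘ ⇑σ = z := by
          funext k; simp
        rw [this]
        exact hzmono.monotone
      · intro i j hij heq
        exfalso
        have : (i : Fin m) = j := by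
          have := hzmono.injective
          have h' : z (σ⁻¹ (σ i)) = z (σ⁻¹ (σ j)) := heq
          simpa using this (by simpa using h')
        exact absurd this hij.ne
    rw [hsort]
    ext k
    · simp
    · rfl
  · intro y hy
    dsimp only
    funext k
    simp
  · rintro ⟨z, σ⟩ hp
    rfl

lemma stepA :
    ∑ᶠ y ∈ {y : Fin m → ℤ | StrictMono y},
        (Matrix.of fun i j : Fin m => α i.castSucc ^ y j).det * (Mmat α f x y).det
      = ∑ y ∈ (Fintype.piFinset fun _ : Fin m => Tset f x).filter (fun y => StrictMono y),
          (Matrix.of fun i j : Fin m => α i.castSucc ^ y j).det * (Mmat α f x y).det := by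
  classical
  refine finsum_mem_eq_sum_of_subset _ ?_ ?_
  · rintro y ⟨hy1, hy2⟩
    refine Finset.mem_coe.2 (Finset.mem_filter.2 ⟨Fintype.mem_piFinset.2 fun j => ?_, hy1⟩)
    by_contra hnot
    refine hy2 ?_
    dsimp only
    rw [Mmat_det_eq_zero_of_not_mem α f x y j hnot, mul_zero]
  · intro y hy
    exact (Finset.mem_filter.1 hy).2

end Aux

/-- Toeplitz-like summation identity with a virtual variable (Proposition A.2 for Laurent
polynomials): for `n = m+1 ≥ 2`, nonzero `α_1, …, α_n`, finitely supported `f` with Laurent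
polynomial `F`, `x ∈ W_n`, and `M(x,y)` the `n × n` matrix whose first `n-1` columns are
`f(x_i - y_j)` and whose last (virtual) column is `α_n^{x_i}`:
`∑_{y ∈ W_{n-1}} det(α_i^{y_j})_{i,j≤n-1} det(M(x,y)) = F(α_1⁻¹)⋯F(α_{n-1}⁻¹) det(α_i^{x_j})`. -/
theorem toeplitz_like_sum_virtual (m : ℕ) (hm : 1 ≤ m)
    (α : Fin (m + 1) → ℂ) (hα : ∀ i, α i ≠ 0)
    (f : ℤ →₀ ℂ) (x : Fin (m + 1) → ℤ) (hx : StrictMono x) :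
    ∑ᶠ y ∈ {y : Fin m → ℤ | StrictMono y},
        (Matrix.of fun i j : Fin m => α i.castSucc ^ y j).det *
          (Matrix.of fun i j : Fin (m + 1) =>
            if h : (j : ℕ) < m then f (x i - y ⟨j, h⟩) else α (Fin.last m) ^ x i).det
      = (∏ i : Fin m, laurentGen f (α i.castSucc)⁻¹) *
          (Matrix.of fun i j : Fin (m + 1) => α i ^ x j).det := by
  have hM : ∀ y : Fin m → ℤ,
      (Matrix.of fun i j : Fin (m + 1) =>
        if h : (j : ℕ) < m then f (x i - y ⟨j, h⟩) else α (Fin.last m) ^ x i) = Mmat α f x y :=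
    fun _ => rfl
  simp only [hM]
  rw [stepA α f x, stepBC α f x, step_D α f x hα]
end
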